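/- arXiv:1306.3410 — 9 statements merged into one kernel-verified Lean document; each statement's English description precedes it below -/
import Mathlib

section
/- Let B be a unital C*-algebra and X a Hilbert C*-module over B. For every x ∈ X, the inner product ⟨x,x⟩ is invertible in B if and only if there exists y ∈ X such that ⟨y,x⟩ = 1. -/
open scoped ComplexOrder RightActions in
/-- The Hilbert C⋆-module class as Mathlib defined it in December 2024 (right `A`-action via
`Aᵐᵒᵖ`, with `⟪x, y <• a⟫ = ⟪x, y⟫ * a`); Mathlib's `CStarModule` now uses a left action. -/
class CStarModuleRight (A E : Type*) [NonUnitalSemiring A] [StarRing A]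
    [Module ℂ A] [AddCommGroup E] [Module ℂ E] [PartialOrder A] [SMul Aᵐᵒᵖ E] [Norm A] [Norm E]
    extends Inner A E where
  inner_add_right {x} {y} {z} : inner x (y + z) = inner x y + inner x z
  inner_self_nonneg {x} : 0 ≤ inner x x
  inner_self {x} : inner x x = 0 ↔ x = 0
  inner_op_smul_right {a : A} {x y : E} : inner x (y <• a) = inner x y * a
  inner_smul_right_complex {z : ℂ} {x} {y} : inner x (z • y) = z • inner x y
  star_inner x y : star (inner x y) = inner y x
  norm_eq_sqrt_norm_inner_self x : ‖x‖ = √‖inner x x‖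

section CStarModuleRightAux

variable {B X : Type*} [CStarAlgebra B] [PartialOrder B] [StarOrderedRing B]
  [NormedAddCommGroup X] [Module ℂ X] [SMul Bᵐᵒᵖ X] [CStarModuleRight B X]

lemma cmr_inner_sub_right {x y z : X} : inner B x (y - z) = inner B x y - inner B x z := by
  have h := CStarModuleRight.inner_add_right (A := B) (x := x) (y := y - z) (z := z)
  rw [sub_add_cancel] at h
  rw [h]
  abel

lemma cmr_inner_sub_left {x y z : X} : inner B (y - z) x = inner B y x - inner B z x := by
  rw [← CStarModuleRight.star_inner x, cmr_inner_sub_right, star_sub,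
    CStarModuleRight.star_inner, CStarModuleRight.star_inner]

lemma cmr_inner_zero_left {x : X} : inner B (0 : X) x = 0 := by
  have h := cmr_inner_sub_left (B := B) (x := x) (y := (0 : X)) (z := (0 : X))
  rw [sub_self, sub_self] at h
  exact h

lemma cmr_inner_op_smul_left {a : B} {x y : X} :
    inner B (MulOpposite.op a • x) y = star a * inner B x y := by
  rw [← CStarModuleRight.star_inner y, CStarModuleRight.inner_op_smul_right, star_mul,
    CStarModuleRight.star_inner]

lemma cmr_inner_smul_left_complex {z : ℂ} {x y : X} :
    inner B (z • x) y = star z • inner B x y := by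
  rw [← CStarModuleRight.star_inner y, CStarModuleRight.inner_smul_right_complex, star_smul,
    CStarModuleRight.star_inner]

lemma cmr_inner_mul_inner_swap_le {x y : X} (hx : x ≠ 0) :
    inner B y x * inner B x y ≤ ‖x‖ ^ 2 • inner B y y := by
  have hr : 0 < ‖x‖ ^ 2 := by
    have := norm_pos_iff.mpr hx
    positivity
  have ha : star (inner B x y) = inner B y x := CStarModuleRight.star_inner x y
  have hxx : ‖x‖ ^ 2 = ‖inner B x x‖ := by
    rw [CStarModuleRight.norm_eq_sqrt_norm_inner_self (A := B) x, Real.sq_sqrt (norm_nonneg _)]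
  have h0 : (0 : B) ≤ inner B (MulOpposite.op (inner B x y) • x - ((‖x‖ ^ 2 : ℝ) : ℂ) • y)
      (MulOpposite.op (inner B x y) • x - ((‖x‖ ^ 2 : ℝ) : ℂ) • y) :=
    CStarModuleRight.inner_self_nonneg
  have hexp : inner B (MulOpposite.op (inner B x y) • x - ((‖x‖ ^ 2 : ℝ) : ℂ) • y)
      (MulOpposite.op (inner B x y) • x - ((‖x‖ ^ 2 : ℝ) : ℂ) • y)
      = star (inner B x y) * inner B x x * inner B x y
        - (‖x‖ ^ 2) • (star (inner B x y) * inner B x y)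
        - (‖x‖ ^ 2) • (star (inner B x y) * inner B x y)
        + (‖x‖ ^ 2) • (‖x‖ ^ 2) • inner B y y := by
    simp only [cmr_inner_sub_left, cmr_inner_sub_right, cmr_inner_op_smul_left,
      CStarModuleRight.inner_op_smul_right, cmr_inner_smul_left_complex,
      CStarModuleRight.inner_smul_right_complex, ← ha]
    simp only [Complex.star_def, Complex.conj_ofReal, Complex.coe_smul, sub_mul, mul_sub, smul_sub, mul_smul_comm, smul_mul_assoc, mul_assoc]
    abel
  have hle : star (inner B x y) * inner B x x * inner B x y
      ≤ (‖x‖ ^ 2) • (star (inner B x y) * inner B x y) := by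
    rw [hxx]
    exact CStarAlgebra.star_left_conjugate_le_norm_smul
      (hb := (CStarModuleRight.star_inner x x : star (inner B x x) = inner B x x))
  rw [hexp] at h0
  have h1 : (0 : B) ≤ (‖x‖ ^ 2) • ((‖x‖ ^ 2) • inner B y y
      - star (inner B x y) * inner B x y) := by
    rw [smul_sub]
    have h2 := add_le_add_right hle ((0 : B) - (‖x‖ ^ 2) • (star (inner B x y) * inner B x y)
      - (‖x‖ ^ 2) • (star (inner B x y) * inner B x y) + (‖x‖ ^ 2) • (‖x‖ ^ 2) • inner B y y)
    have h3 : (0 : B) ≤ (‖x‖ ^ 2) • (star (inner B x y) * inner B x y)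
        - (‖x‖ ^ 2) • (star (inner B x y) * inner B x y)
        - (‖x‖ ^ 2) • (star (inner B x y) * inner B x y)
        + (‖x‖ ^ 2) • (‖x‖ ^ 2) • inner B y y := by
      refine h0.trans ?_
      have := sub_le_sub_right (sub_le_sub_right hle
        ((‖x‖ ^ 2) • (star (inner B x y) * inner B x y)))
        ((‖x‖ ^ 2) • (star (inner B x y) * inner B x y))
      exact add_le_add_left this _
    convert h3 using 1
    abel
  have h4 := smul_nonneg (inv_nonneg.mpr hr.le) h1
  rw [smul_smul, inv_mul_cancel₀ hr.ne', one_smul, sub_nonneg, ha] at h4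
  exact h4

end CStarModuleRightAux

/-- Let `B` be a unital C⋆-algebra and `X` a Hilbert C⋆-module over `B`.
For every `x ∈ X`, the inner product `⟪x, x⟫` is invertible in `B` if and only if there
exists `y ∈ X` such that `⟪y, x⟫ = 1`. -/
theorem inner_self_isUnit_iff_exists_inner_eq_one
    {B X : Type*} [CStarAlgebra B] [PartialOrder B] [StarOrderedRing B]
    [NormedAddCommGroup X] [Module ℂ X] [SMul Bᵐᵒᵖ X] [CStarModuleRight B X] [CompleteSpace X]
    (x : X) :
    IsUnit (inner B x x : B) ↔ ∃ y : X, (inner B y x : B) = 1 := by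
  constructor
  · rintro ⟨u, hu⟩
    refine ⟨MulOpposite.op (↑u⁻¹ : B) • x, ?_⟩
    rw [cmr_inner_op_smul_left, ← hu]
    calc star (↑u⁻¹ : B) * ↑u
        = star (↑u⁻¹ : B) * star (↑u : B) := by
          congr 1
          rw [hu]
          exact (CStarModuleRight.star_inner x x).symm
      _ = star ((↑u : B) * ↑u⁻¹) := by rw [star_mul]
      _ = 1 := by simp
  · rintro ⟨y, hy⟩
    rcases eq_or_ne y 0 with rfl | hy0
    · simp only [cmr_inner_zero_left] at hy
      have : Subsingleton B := subsingleton_of_zero_eq_one hy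
      exact isUnit_of_subsingleton _
    · have hcs : (inner B x y : B) * (inner B y x : B) ≤ ‖y‖ ^ 2 • (inner B x x : B) :=
        cmr_inner_mul_inner_swap_le hy0
      have h1 : (1 : B) ≤ ‖y‖ ^ 2 • (inner B x x : B) := by
        rwa [← CStarModuleRight.star_inner, hy, star_one, one_mul] at hcs
      have hunit : IsUnit (‖y‖ ^ 2 • (inner B x x : B)) :=
        CStarAlgebra.isUnit_of_le 1 h1 isStrictlyPositive_one
      have hne : ‖y‖ ^ 2 ≠ 0 := by
        have : ‖y‖ ≠ 0 := norm_ne_zero_iff.mpr hy0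
        positivity
      have := (isUnit_smul_iff (Units.mk0 (‖y‖ ^ 2) hne) (inner B x x : B)).mp
        (by simpa [Units.smul_def] using hunit)
      exact this
end

section
/- Let B be a unital C*-algebra and X a Hilbert C*-module over B. For every x ∈ X, the inner product ⟨x,x⟩ is invertible in B if and only if there exists y ∈ X such that ⟨x,y⟩ = 1. -/
open scoped RightActions

/-- Let `B` be a unital C⋆-algebra and `X` a Hilbert C⋆-module over `B`.
For every `x ∈ X`, the inner product `⟪x, x⟫` is invertible in `B` if and only if there
exists `y ∈ X` such that `⟪x, y⟫ = 1`. -/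
theorem inner_self_isUnit_iff_exists_inner_right_eq_one
    {B X : Type*} [CStarAlgebra B] [PartialOrder B] [StarOrderedRing B]
    [NormedAddCommGroup X] [Module ℂ X] [SMul B X] [CStarModule B X] [CompleteSpace X]
    (x : X) :
    IsUnit (inner B x x : B) ↔ ∃ y : X, (inner B x y : B) = 1 := by
  constructor
  · rintro ⟨u, hu⟩
    refine ⟨(↑u⁻¹ : B) • x, ?_⟩
    rw [CStarModule.inner_op_smul_right, ← hu]
    exact u.inv_mul
  · rintro ⟨y, hy⟩
    have hcs : (inner B y x : B) * inner B x y ≤ ‖y‖ ^ 2 • (inner B x x : B) :=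
      CStarModule.inner_mul_inner_swap_le
    have hyx : (inner B y x : B) = 1 := by
      have := congrArg star hy
      simpa [CStarModule.star_inner] using this
    rw [hyx, hy, one_mul] at hcs
    rcases eq_or_ne y 0 with rfl | hy0
    · rw [CStarModule.inner_zero_right] at hy
      have : Subsingleton B := subsingleton_of_zero_eq_one hy
      exact isUnit_of_subsingleton _
    have hr : (‖y‖ ^ 2 : ℝ) ≠ 0 := by
      have hn : ‖y‖ ≠ 0 := fun h => hy0 ((CStarModule.norm_zero_iff (A := B) y).mp h)
      positivity
    have hu : IsUnit ((‖y‖ ^ 2 : ℝ) • (inner B x x : B)) :=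
      CStarAlgebra.isUnit_of_le 1 hcs
    have := (isUnit_smul_iff (Units.mk0 (‖y‖ ^ 2 : ℝ) hr) (inner B x x : B)).mp (by simpa using hu)
    exact this
end

section
/- Let B be a unital C*-algebra and X a Hilbert C*-module over B. For every x ∈ X, the inner product ⟨x,x⟩ is invertible in B if and only if there exists y ∈ X such that ⟨y,x⟩ is invertible in B. -/
open scoped CStarModule in
/-- Let `B` be a unital C⋆-algebra and `X` a Hilbert C⋆-module over `B`.
For every `x ∈ X`, the inner product `⟪x, x⟫` is invertible in `B` if and only if there
exists `y ∈ X` such that `⟪y, x⟫` is invertible in `B`. -/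
theorem inner_self_isUnit_iff_exists_inner_isUnit
    {B X : Type*} [CStarAlgebra B] [PartialOrder B] [StarOrderedRing B]
    [NormedAddCommGroup X] [Module ℂ X] [SMul B X] [CStarModule B X] [CompleteSpace X]
    (x : X) :
    IsUnit (inner B x x : B) ↔ ∃ y : X, IsUnit (inner B y x : B) := by
  constructor
  · exact fun h => ⟨x, h⟩
  · rintro ⟨y, hy⟩
    by_cases hy0 : y = 0
    · subst hy0
      rw [CStarModule.inner_zero_left, isUnit_zero_iff] at hy
      have : Subsingleton B := subsingleton_of_zero_eq_one hy
      exact isUnit_of_subsingleton _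
    · have key : (inner B y x : B) * inner B x y ≤ ‖y‖ ^ 2 • (inner B x x : B) :=
        CStarModule.inner_mul_inner_swap_le (x := y) (y := x)
      have hunit : IsUnit ((inner B y x : B) * inner B x y) := by
        rw [← CStarModule.star_inner y x]
        exact hy.mul hy.star
      have hnonneg : 0 ≤ ((inner B y x : B) * inner B x y) := by
        rw [← CStarModule.star_inner y x]
        exact mul_star_self_nonneg _
      have h2 : IsUnit (‖y‖ ^ 2 • (inner B x x : B)) :=
        CStarAlgebra.isUnit_of_le _ key (hunit.isStrictlyPositive hnonneg)
      have hny : (‖y‖ ^ 2 : ℝ) ≠ 0 := pow_ne_zero _ (norm_ne_zero_iff.mpr hy0)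
      rwa [← isUnit_smul_iff (Units.mk0 (‖y‖ ^ 2) hny) (inner B x x : B)]
end

section
/- Let B be a unital C*-algebra, X a Hilbert C*-module over B, n ≥ 1, and x_1,…,x_n ∈ X. Then ∑_{k=1}^n ⟨x_k,x_k⟩ is invertible in B if and only if there exist y_1,…,y_n ∈ X such that ∑_{k=1}^n ⟨y_k,x_k⟩ = 1. -/
open scoped InnerProductSpace RightActions

/-- The December 2024 Mathlib `CStarModule`: a right `A`-module (via `SMul Aᵐᵒᵖ E`) with an
`A`-valued inner product. Mathlib's current `CStarModule` is a left module instead. -/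
class RightCStarModule (A E : Type*) [NonUnitalSemiring A] [StarRing A]
    [Module ℂ A] [AddCommGroup E] [Module ℂ E] [PartialOrder A] [SMul Aᵐᵒᵖ E] [Norm A] [Norm E]
    extends Inner A E where
  inner_add_right {x} {y} {z} : inner x (y + z) = inner x y + inner x z
  inner_self_nonneg {x} : 0 ≤ inner x x
  inner_self {x} : inner x x = 0 ↔ x = 0
  inner_op_smul_right {a : A} {x y : E} : inner x (MulOpposite.op a • y) = inner x y * a
  inner_smul_right_complex {z : ℂ} {x} {y} : inner x (z • y) = z • inner x y
  star_inner x y : star (inner x y) = inner y x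
  norm_eq_sqrt_norm_inner_self x : ‖x‖ = √‖inner x x‖

def FlipMod (B X : Type*) : Type _ := X

instance FlipMod.instNACG {B X : Type*} [h : NormedAddCommGroup X] :
    NormedAddCommGroup (FlipMod B X) := h

noncomputable instance FlipMod.instModule {B X : Type*} [NormedAddCommGroup X] [Module ℂ X] :
    Module ℂ (FlipMod B X) := Module.compHom X (starRingEnd ℂ)

instance FlipMod.instSMul {B X : Type*} [Star B] [SMul Bᵐᵒᵖ X] : SMul B (FlipMod B X) :=
  ⟨fun a x => (MulOpposite.op (star a) • (show X from x) : X)⟩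

section FlipModSec

variable {B X : Type*} [CStarAlgebra B] [PartialOrder B] [NormedAddCommGroup X] [Module ℂ X]
  [SMul Bᵐᵒᵖ X] [RightCStarModule B X]

lemma RCSM_add_left (x y z : X) : inner B (x + y) z = inner B x z + inner B y z := by
  rw [← RightCStarModule.star_inner z, RightCStarModule.inner_add_right, star_add,
    RightCStarModule.star_inner, RightCStarModule.star_inner]

lemma RCSM_smul_left (a : B) (x y : X) :
    inner B (MulOpposite.op a • x) y = star a * inner B x y := by
  rw [← RightCStarModule.star_inner y, RightCStarModule.inner_op_smul_right, star_mul,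
    RightCStarModule.star_inner]

lemma RCSM_csmul_left (z : ℂ) (x y : X) : inner B (z • x) y = star z • inner B x y := by
  rw [← RightCStarModule.star_inner y, RightCStarModule.inner_smul_right_complex, star_smul,
    RightCStarModule.star_inner]

noncomputable instance FlipMod.instCStarModule : CStarModule B (FlipMod B X) where
  inner x y := inner B (show X from y) (show X from x)
  inner_add_right {x y z} := RCSM_add_left (B := B) (show X from y) z x
  inner_self_nonneg {x} := RightCStarModule.inner_self_nonneg (A := B) (x := (show X from x))
  inner_self {x} := RightCStarModule.inner_self (A := B) (x := (show X from x))
  inner_op_smul_right {a x y} := by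
    show inner B (MulOpposite.op (star a) • (show X from y)) (show X from x)
      = a * inner B (show X from y) (show X from x)
    rw [RCSM_smul_left, star_star]
  inner_smul_right_complex {z x y} := by
    show inner B ((starRingEnd ℂ z) • (show X from y)) (show X from x)
      = z • inner B (show X from y) (show X from x)
    rw [RCSM_csmul_left, starRingEnd_apply, star_star]
  star_inner x y := RightCStarModule.star_inner (A := B) (show X from y) (show X from x)
  norm_eq_sqrt_norm_inner_self x :=
    RightCStarModule.norm_eq_sqrt_norm_inner_self (A := B) (show X from x)

end FlipModSec

/-- Let `B` be a unital C⋆-algebra, `X` a Hilbert C⋆-module over `B`,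
`n ≥ 1`, and `x₁, …, xₙ ∈ X`. Then `∑ₖ ⟪xₖ, xₖ⟫` is invertible in `B` if and only if there
exist `y₁, …, yₙ ∈ X` such that `∑ₖ ⟪yₖ, xₖ⟫ = 1`. -/
theorem isUnit_sum_inner_self_iff_exists_sum_inner_eq_one
    {B X : Type*} [CStarAlgebra B] [PartialOrder B] [StarOrderedRing B]
    [NormedAddCommGroup X] [Module ℂ X] [SMul Bᵐᵒᵖ X] [RightCStarModule B X] [CompleteSpace X]
    (n : ℕ) (hn : 1 ≤ n) (x : Fin n → X) :
    IsUnit (∑ k, (inner B (x k) (x k) : B)) ↔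
      ∃ y : Fin n → X, ∑ k, (inner B (y k) (x k) : B) = 1 := by
  constructor
  · rintro ⟨u, hu⟩
    refine ⟨fun k => x k <• star (↑u⁻¹ : B), ?_⟩
    have : ∀ k, (inner B (x k <• star (↑u⁻¹ : B)) (x k) : B)
        = (↑u⁻¹ : B) * inner B (x k) (x k) := by
      intro k
      rw [RCSM_smul_left, star_star]
    simp_rw [this, ← Finset.mul_sum, ← hu, Units.inv_mul]
  · rintro ⟨y, hy⟩
    set x' : WithCStarModule B (∀ _ : Fin n, FlipMod B X) :=
      (WithCStarModule.equiv B (∀ _ : Fin n, FlipMod B X)).symm x with hx'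
    set y' : WithCStarModule B (∀ _ : Fin n, FlipMod B X) :=
      (WithCStarModule.equiv B (∀ _ : Fin n, FlipMod B X)).symm y with hy'
    have h1 : ⟪x', y'⟫_B = 1 := by
      rw [WithCStarModule.pi_inner]; exact hy
    have h2 : ⟪y', x'⟫_B = 1 := by
      rw [← CStarModule.star_inner, h1, star_one]
    have key := CStarModule.inner_mul_inner_swap_le (A := B) (x := y') (y := x')
    rw [h2, h1, one_mul] at key
    have hS : ⟪x', x'⟫_B = ∑ k, (inner B (x k) (x k) : B) := by
      rw [WithCStarModule.pi_inner]; rfl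
    rw [hS] at key
    set S := ∑ k, (inner B (x k) (x k) : B)
    set c : ℝ := ‖y'‖ ^ 2 with hc
    rcases eq_or_ne c 0 with h0 | h0
    · rw [h0, zero_smul] at key
      have h10 : (1 : B) = 0 := le_antisymm key zero_le_one
      have : Subsingleton B := subsingleton_of_zero_eq_one h10.symm
      exact isUnit_of_subsingleton _
    · have hcpos : 0 < c := lt_of_le_of_ne (by positivity) (Ne.symm h0)
      have hSnonneg : 0 ≤ S := Finset.sum_nonneg fun k _ => RightCStarModule.inner_self_nonneg
      have hcS : 0 ≤ c • S := smul_nonneg hcpos.le hSnonneg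
      have hunit : IsUnit (c • S) :=
        CStarAlgebra.isUnit_of_le (1 : B) key isStrictlyPositive_one
      have hrw : c • S = (c • (1 : B)) * S := by rw [smul_mul_assoc, one_mul]
      rw [hrw] at hunit
      have hmul : (c • (1 : B)) * (c⁻¹ • (1 : B)) = 1 := by
        rw [smul_mul_assoc, one_mul, smul_smul, mul_inv_cancel₀ h0, one_smul]
      have hmul' : (c⁻¹ • (1 : B)) * (c • (1 : B)) = 1 := by
        rw [smul_mul_assoc, one_mul, smul_smul, inv_mul_cancel₀ h0, one_smul]
      have hc1 : IsUnit (c • (1 : B)) := ⟨⟨c • (1 : B), c⁻¹ • (1 : B), hmul, hmul'⟩, rfl⟩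
      have := (hc1.unit⁻¹.isUnit).mul hunit
      rwa [← mul_assoc, IsUnit.val_inv_mul, one_mul] at this
end

section
/- Let A be a unital C*-algebra, N ≥ 1, p ∈ M_N(A) a projection, and X = A^N·p = {x ∈ M_{1×N}(A) : x·p = x}. For k ≥ 1 and x_1,…,x_k ∈ X, the tuple (x_1,…,x_k) generates X as a left A-module, i.e., A·x_1 + ⋯ + A·x_k = X, if and only if ∑_{i=1}^k x_i*x_i is invertible in the corner algebra pM_N(A)p, i.e., there exists c ∈ M_N(A) with c = pcp and c·(∑_i x_i*x_i) = p = (∑_i x_i*x_i)·c. -/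
open Matrix

section Aux

variable {A : Type*} [CStarAlgebra A] [PartialOrder A] [StarOrderedRing A]

private lemma aux_cross (a b : A) :
    star a * b + star b * a ≤ star a * a + star b * b := by
  have h := star_mul_self_nonneg (a - b)
  have e : star (a - b) * (a - b)
      = star a * a + star b * b - (star a * b + star b * a) := by
    rw [star_sub]; noncomm_ring
  rw [e, sub_nonneg] at h
  exact h

private lemma aux_sq_sum {ι : Type*} (s : Finset ι) (z : ι → A) :
    star (∑ i ∈ s, z i) * (∑ i ∈ s, z i)
      ≤ 2 ^ s.card • ∑ i ∈ s, star (z i) * z i := by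
  classical
  induction s using Finset.cons_induction with
  | empty => simp
  | cons a s ha ih =>
    rw [Finset.sum_cons, Finset.sum_cons, Finset.card_cons]
    set S := ∑ i ∈ s, z i with hs
    set Q := ∑ i ∈ s, star (z i) * z i with hq
    have hQ : (0:A) ≤ Q := Finset.sum_nonneg fun i _ => star_mul_self_nonneg _
    have h1 : star (z a + S) * (z a + S)
        = star (z a) * z a + star S * S + (star (z a) * S + star S * z a) := by
      rw [star_add]; noncomm_ring
    have h2 : star (z a + S) * (z a + S)
        ≤ 2 • (star (z a) * z a) + 2 • (star S * S) := by
      rw [h1, two_smul, two_smul]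
      calc star (z a) * z a + star S * S + (star (z a) * S + star S * z a)
          ≤ star (z a) * z a + star S * S + (star (z a) * z a + star S * S) :=
            add_le_add_right (aux_cross _ _) _
        _ = star (z a) * z a + star (z a) * z a + (star S * S + star S * S) := by abel
    refine h2.trans ?_
    have h3 : (2:ℕ) • (star S * S) ≤ 2 • (2 ^ s.card • Q) :=
      nsmul_le_nsmul_right ih 2
    have h4 : (2:ℕ) • (star (z a) * z a) ≤ 2 ^ (s.card + 1) • (star (z a) * z a) :=
      nsmul_le_nsmul_left (star_mul_self_nonneg _)
        (by calc (2:ℕ) = 2 ^ 1 := (pow_one 2).symm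
              _ ≤ 2 ^ (s.card + 1) := Nat.pow_le_pow_right (by norm_num) (by omega))
    calc 2 • (star (z a) * z a) + 2 • (star S * S)
        ≤ 2 ^ (s.card + 1) • (star (z a) * z a) + 2 • (2 ^ s.card • Q) :=
          add_le_add h4 h3
      _ = 2 ^ (s.card + 1) • (star (z a) * z a) + 2 ^ (s.card + 1) • Q := by
          rw [smul_smul]
          congr 2
          rw [pow_succ]
          ring
      _ = 2 ^ (s.card + 1) • (star (z a) * z a + Q) := by rw [smul_add]

private lemma aux_smul_one_nonneg (t : ℝ) (ht : 0 ≤ t) : (0:A) ≤ t • 1 := by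
  have h := star_mul_self_nonneg ((Real.sqrt t) • (1:A))
  have e : star ((Real.sqrt t) • (1:A)) * ((Real.sqrt t) • (1:A)) = t • (1:A) := by
    rw [star_smul, star_one, star_trivial, smul_mul_assoc, mul_smul_comm, mul_one,
      smul_smul, Real.mul_self_sqrt ht]
  rwa [e] at h

private lemma aux_le_nat_smul_one (a : A) (ha : IsSelfAdjoint a) (n : ℕ)
    (h : ‖a‖ ≤ n) : a ≤ n • (1:A) := by
  have key : (0:A) ≤ ((n:ℝ) - ‖a‖) • 1 := aux_smul_one_nonneg _ (by linarith)
  have h2 : algebraMap ℝ A ‖a‖ ≤ (n:ℝ) • 1 := by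
    rw [Algebra.algebraMap_eq_smul_one, ← sub_nonneg, ← sub_smul]; exact key
  refine (IsSelfAdjoint.le_algebraMap_norm_self ha).trans (h2.trans_eq ?_)
  exact Nat.cast_smul_eq_nsmul ℝ n (1:A)

private lemma aux_conj_bound (q u : A) (n : ℕ) (h : ‖star q * q‖ ≤ n) :
    star (q * u) * (q * u) ≤ n • (star u * u) := by
  have h1 : star q * q ≤ n • (1:A) :=
    aux_le_nat_smul_one _ (IsSelfAdjoint.star_mul_self q) n h
  have h2 := star_left_conjugate_le_conjugate h1 u
  calc star (q * u) * (q * u) = star u * (star q * q) * u := by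
        rw [StarMul.star_mul]; noncomm_ring
    _ ≤ star u * (n • (1:A)) * u := h2
    _ = n • (star u * u) := by rw [mul_smul_comm, smul_mul_assoc, mul_one]

private lemma aux_dot_nonneg {ι : Type*} [Fintype ι] (u : ι → A) :
    (0:A) ≤ star u ⬝ᵥ u :=
  Finset.sum_nonneg fun i _ => star_mul_self_nonneg _

private lemma aux_B_bound {ι κ : Type*} [Fintype ι] [Fintype κ] (B : Matrix ι κ A) :
    ∃ M : ℕ, ∀ u : κ → A, star (B *ᵥ u) ⬝ᵥ (B *ᵥ u) ≤ M • (star u ⬝ᵥ u) := by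
  classical
  set C : ℕ := ∑ j : ι, ∑ i : κ, ⌈‖star (B j i) * B j i‖⌉₊ with hC
  refine ⟨Fintype.card ι * (2 ^ Fintype.card κ * C), fun u => ?_⟩
  have hQ : (0:A) ≤ star u ⬝ᵥ u := aux_dot_nonneg u
  have hCij : ∀ (j : ι) (i : κ), ‖star (B j i) * B j i‖ ≤ (C:ℝ) := by
    intro j i
    refine (Nat.le_ceil _).trans ?_
    have h1 : ⌈‖star (B j i) * B j i‖⌉₊ ≤ ∑ i' : κ, ⌈‖star (B j i') * B j i'‖⌉₊ :=
      Finset.single_le_sum (f := fun i' => ⌈‖star (B j i') * B j i'‖⌉₊)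
        (fun _ _ => Nat.zero_le _) (Finset.mem_univ i)
    have h2 : (∑ i' : κ, ⌈‖star (B j i') * B j i'‖⌉₊) ≤ C :=
      Finset.single_le_sum (f := fun j' => ∑ i' : κ, ⌈‖star (B j' i') * B j' i'‖⌉₊)
        (fun _ _ => Nat.zero_le _) (Finset.mem_univ j)
    exact_mod_cast h1.trans h2
  have row : ∀ j : ι, star ((B *ᵥ u) j) * ((B *ᵥ u) j)
      ≤ (2 ^ Fintype.card κ * C) • (star u ⬝ᵥ u) := by
    intro j
    have e : (B *ᵥ u) j = ∑ i : κ, B j i * u i := rfl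
    have h1 : star ((B *ᵥ u) j) * ((B *ᵥ u) j)
        ≤ 2 ^ Fintype.card κ • ∑ i : κ, star (B j i * u i) * (B j i * u i) := by
      rw [e]
      simpa using aux_sq_sum Finset.univ (fun i => B j i * u i)
    have h2 : (∑ i : κ, star (B j i * u i) * (B j i * u i))
        ≤ ∑ i : κ, C • (star (u i) * u i) :=
      Finset.sum_le_sum fun i _ => aux_conj_bound _ _ _ (hCij j i)
    refine h1.trans ?_
    calc 2 ^ Fintype.card κ • ∑ i : κ, star (B j i * u i) * (B j i * u i)
        ≤ 2 ^ Fintype.card κ • ∑ i : κ, C • (star (u i) * u i) :=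
          nsmul_le_nsmul_right h2 _
      _ = (2 ^ Fintype.card κ * C) • (star u ⬝ᵥ u) := by
          rw [← Finset.smul_sum, smul_smul]
          rfl
  calc star (B *ᵥ u) ⬝ᵥ (B *ᵥ u) = ∑ j : ι, star ((B *ᵥ u) j) * ((B *ᵥ u) j) := rfl
    _ ≤ ∑ _j : ι, (2 ^ Fintype.card κ * C) • (star u ⬝ᵥ u) :=
        Finset.sum_le_sum fun j _ => row j
    _ = (Fintype.card ι * (2 ^ Fintype.card κ * C)) • (star u ⬝ᵥ u) := by
        rw [Finset.sum_const, Finset.card_univ, smul_smul]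

set_option maxHeartbeats 1000000 in
private lemma aux_keyPos (n : ℕ) (T : Matrix (Fin n) (Fin n) A) (hH : Tᴴ = T)
    (hB : ∀ v : Fin n → A, star v ⬝ᵥ v ≤ star v ⬝ᵥ (T *ᵥ v)) :
    ∃ t, T * t = 1 ∧ t * T = 1 := by
  classical
  induction n with
  | zero => exact ⟨1, by ext i j; exact i.elim0, by ext i j; exact i.elim0⟩
  | succ m ih =>
    set e : Fin 1 ⊕ Fin m ≃ Fin (m + 1) :=
      finSumFinEquiv.trans (finCongr (Nat.add_comm 1 m)) with hedef
    set T' : Matrix (Fin 1 ⊕ Fin m) (Fin 1 ⊕ Fin m) A := T.submatrix e e with hT'def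
    have hH' : T'ᴴ = T' := by rw [hT'def, conjTranspose_submatrix, hH]
    have hB' : ∀ v : Fin 1 ⊕ Fin m → A, star v ⬝ᵥ v ≤ star v ⬝ᵥ (T' *ᵥ v) := by
      intro v
      have h1 : T' *ᵥ v = (T *ᵥ (v ∘ e.symm)) ∘ e := Matrix.submatrix_mulVec_equiv T v e e
      have h2 : ∀ w : Fin (m + 1) → A, star v ⬝ᵥ (w ∘ e) = star (v ∘ e.symm) ⬝ᵥ w := by
        intro w
        refine Fintype.sum_equiv e _ _ fun i => ?_
        simp [Equiv.symm_apply_apply]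
      have h3 : star v ⬝ᵥ v = star (v ∘ e.symm) ⬝ᵥ (v ∘ e.symm) := by
        refine Fintype.sum_equiv e _ _ fun i => ?_
        simp [Equiv.symm_apply_apply]
      rw [h1, h2, h3]
      exact hB (v ∘ e.symm)
    set a := T'.toBlocks₁₁ with hadef
    set b := T'.toBlocks₁₂ with hbdef
    set c := T'.toBlocks₂₁ with hcdef
    set d := T'.toBlocks₂₂ with hddef
    have hT4 : T' = fromBlocks a b c d := (fromBlocks_toBlocks T').symm
    have hc : c = bᴴ := by
      ext i j
      have h := congrFun (congrFun hH' (Sum.inr i)) (Sum.inl j)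
      simpa [hbdef, hcdef, Matrix.toBlocks₁₂, Matrix.toBlocks₂₁,
        Matrix.conjTranspose_apply] using h.symm
    have hdH : dᴴ = d := by
      ext i j
      have h := congrFun (congrFun hH' (Sum.inr i)) (Sum.inr j)
      simpa [hddef, Matrix.toBlocks₂₂, Matrix.conjTranspose_apply] using h
    have hαsa : _root_.IsSelfAdjoint (a 0 0) := by
      have h := congrFun (congrFun hH' (Sum.inl 0)) (Sum.inl 0)
      simpa [hadef, Matrix.toBlocks₁₁, _root_.IsSelfAdjoint,
        Matrix.conjTranspose_apply] using h
    have h1α : (1 : A) ≤ a 0 0 := by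
      have h := hB' (Sum.elim (fun _ => (1 : A)) 0)
      simpa [hadef, Matrix.toBlocks₁₁, dotProduct, Matrix.mulVec,
        Fintype.sum_sum_type] using h
    have hαu : IsUnit (a 0 0) := CStarAlgebra.isUnit_of_le 1 h1α isStrictlyPositive_one
    obtain ⟨αu, hαu_eq⟩ := hαu
    set β := (↑αu⁻¹ : A) with hβdef
    have hαβ : a 0 0 * β = 1 := by rw [hβdef, ← hαu_eq]; exact αu.mul_inv
    have hβα : β * a 0 0 = 1 := by rw [hβdef, ← hαu_eq]; exact αu.inv_mul
    have hβstar : star β = β := by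
      have h1 : star (a 0 0) = a 0 0 := hαsa
      calc star β = star β * (a 0 0 * β) := by rw [hαβ, mul_one]
        _ = (star β * star (a 0 0)) * β := by rw [h1, mul_assoc]
        _ = star (a 0 0 * β) * β := by rw [StarMul.star_mul]
        _ = β := by rw [hαβ, star_one, one_mul]
    set a' : Matrix (Fin 1) (Fin 1) A := Matrix.of (fun _ _ => β) with ha'def
    have haa' : a * a' = 1 := by
      ext i j
      rw [Subsingleton.elim i 0, Subsingleton.elim j 0]
      simpa [ha'def, Matrix.mul_apply, Matrix.one_apply] using hαβ
    have ha'a : a' * a = 1 := by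
      ext i j
      rw [Subsingleton.elim i 0, Subsingleton.elim j 0]
      simpa [ha'def, Matrix.mul_apply, Matrix.one_apply] using hβα
    have ha'H : a'ᴴ = a' := by
      ext i j
      simp [ha'def, Matrix.conjTranspose_apply, hβstar]
    set s := d - c * a' * b with hsdef
    have hd : d = s + c * a' * b := by rw [hsdef]; abel
    have hsH : sᴴ = s := by
      have hmul : (c * a' * b)ᴴ = c * a' * b := by
        rw [hc, Matrix.conjTranspose_mul, Matrix.conjTranspose_mul,
          Matrix.conjTranspose_conjTranspose, ha'H, Matrix.mul_assoc]
      rw [hsdef, Matrix.conjTranspose_sub, hdH, hmul]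
    have hsB : ∀ w : Fin m → A, star w ⬝ᵥ w ≤ star w ⬝ᵥ (s *ᵥ w) := by
      intro w
      set u : Fin 1 → A := a' *ᵥ (b *ᵥ w) with hudef
      have hb1 : T' *ᵥ (Sum.elim (-u) w) = Sum.elim (0 : Fin 1 → A) (s *ᵥ w) := by
        rw [hT4, fromBlocks_mulVec]
        have hvl : Sum.elim (-u) w ∘ Sum.inl = -u := rfl
        have hvr : Sum.elim (-u) w ∘ Sum.inr = w := rfl
        rw [hvl, hvr, Matrix.mulVec_neg, Matrix.mulVec_neg, hudef,
          Matrix.mulVec_mulVec, haa', Matrix.one_mulVec, neg_add_cancel,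
          Matrix.mulVec_mulVec, Matrix.mulVec_mulVec, hsdef, Matrix.sub_mulVec,
          neg_add_eq_sub]
      have hq1 : star (Sum.elim (-u) w) ⬝ᵥ (T' *ᵥ (Sum.elim (-u) w))
          = star w ⬝ᵥ (s *ᵥ w) := by
        rw [hb1]
        simp [dotProduct, Fintype.sum_sum_type]
      have hq2 : star w ⬝ᵥ w ≤ star (Sum.elim (-u) w) ⬝ᵥ (Sum.elim (-u) w) := by
        have e2 : star (Sum.elim (-u) w) ⬝ᵥ (Sum.elim (-u) w)
            = star (-u) ⬝ᵥ (-u) + star w ⬝ᵥ w := by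
          simp [dotProduct, Fintype.sum_sum_type]
        rw [e2]
        exact le_add_of_nonneg_left (aux_dot_nonneg _)
      exact hq2.trans ((hB' (Sum.elim (-u) w)).trans_eq hq1)
    obtain ⟨s', hss', hs's⟩ := ih s hsH hsB
    set t' : Matrix (Fin 1 ⊕ Fin m) (Fin 1 ⊕ Fin m) A :=
      fromBlocks (a' + a' * b * s' * (c * a')) (-(a' * b * s')) (-(s' * (c * a'))) s'
      with ht'def
    have haaZ : ∀ {κ : Type} (Z : Matrix (Fin 1) κ A), a * (a' * Z) = Z := by
      intro κ Z; rw [← Matrix.mul_assoc, haa', Matrix.one_mul]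
    have hssZ : ∀ {κ : Type} (Z : Matrix (Fin m) κ A), s * (s' * Z) = Z := by
      intro κ Z; rw [← Matrix.mul_assoc, hss', Matrix.one_mul]
    have hright : T' * t' = 1 := by
      rw [hT4, ht'def, fromBlocks_multiply]
      have e11 : a * (a' + a' * b * s' * (c * a')) + b * -(s' * (c * a')) = 1 := by
        simp only [Matrix.mul_add, Matrix.add_mul, Matrix.mul_neg, Matrix.neg_mul,
          Matrix.mul_assoc, haa', haaZ, hssZ, Matrix.one_mul]
        abel
      have e12 : a * -(a' * b * s') + b * s' = 0 := by
        simp only [Matrix.mul_add, Matrix.add_mul, Matrix.mul_neg, Matrix.neg_mul,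
          Matrix.mul_assoc, haa', haaZ, hssZ, Matrix.one_mul]
        abel
      have e21 : c * (a' + a' * b * s' * (c * a')) + d * -(s' * (c * a')) = 0 := by
        rw [hd]
        simp only [Matrix.mul_add, Matrix.add_mul, Matrix.mul_neg, Matrix.neg_mul,
          Matrix.mul_assoc, haa', hss', haaZ, hssZ, Matrix.one_mul]
        abel
      have e22 : c * -(a' * b * s') + d * s' = 1 := by
        rw [hd]
        simp only [Matrix.mul_add, Matrix.add_mul, Matrix.mul_neg, Matrix.neg_mul,
          Matrix.mul_assoc, haa', hss', haaZ, hssZ, Matrix.one_mul]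
        abel
      rw [e11, e12, e21, e22, fromBlocks_one]
    have hleft : t' * T' = 1 := by
      have h1 : t'ᴴ * T' = 1 := by
        have h := congrArg conjTranspose hright
        rwa [Matrix.conjTranspose_mul, hH', Matrix.conjTranspose_one] at h
      have h2 : t'ᴴ = t' := by
        calc t'ᴴ = t'ᴴ * (T' * t') := by rw [hright, mul_one]
          _ = (t'ᴴ * T') * t' := by rw [mul_assoc]
          _ = t' := by rw [h1, one_mul]
      rw [← h2]; exact h1
    have hTT' : T = T'.submatrix e.symm e.symm := by
      rw [hT'def, Matrix.submatrix_submatrix]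
      simp
    refine ⟨t'.submatrix e.symm e.symm, ?_, ?_⟩
    · rw [hTT', Matrix.submatrix_mul_equiv, hright, Matrix.submatrix_one_equiv]
    · rw [hTT', Matrix.submatrix_mul_equiv, hleft, Matrix.submatrix_one_equiv]

private lemma aux_polar {A : Type*} [CStarAlgebra A] {ι κ : Type*} [Fintype ι] [Fintype κ]
    (Mt : Matrix ι κ A) (v : κ → A) :
    star (Mt *ᵥ v) ⬝ᵥ (Mt *ᵥ v) = star v ⬝ᵥ ((Mtᴴ * Mt) *ᵥ v) := by
  rw [Matrix.star_mulVec, ← Matrix.mulVec_mulVec, Matrix.dotProduct_mulVec,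
    Matrix.dotProduct_mulVec, Matrix.dotProduct_mulVec]

end Aux

/-- Let `A` be a unital C⋆-algebra, `p ∈ M_N(A)` a projection, and
`X = Aᴺ·p = {x ∈ M_{1×N}(A) : x·p = x}`.  For `x₁, …, x_k ∈ X`, the tuple `(x₁, …, x_k)`
generates `X` as a left `A`-module if and only if `∑ᵢ xᵢᴴ * xᵢ` is invertible in the corner
algebra `p M_N(A) p`, i.e. there is `c ∈ M_N(A)` with `c = p c p` and
`c * (∑ᵢ xᵢᴴ xᵢ) = p = (∑ᵢ xᵢᴴ xᵢ) * c`. -/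
theorem gen_rowSpace_iff_isUnit_corner (A : Type*) [CStarAlgebra A]
    (N : ℕ) (hN : 1 ≤ N)
    (p : Matrix (Fin N) (Fin N) A) (hp : p * p = p) (hps : pᴴ = p)
    (k : ℕ) (hk : 1 ≤ k)
    (x : Fin k → Matrix (Fin 1) (Fin N) A) (hx : ∀ i, x i * p = x i) :
    (∀ v : Matrix (Fin 1) (Fin N) A, v * p = v →
        ∃ a : Fin k → A, ∑ i, a i • x i = v) ↔
      ∃ c : Matrix (Fin N) (Fin N) A, c = p * c * p ∧
        c * (∑ i, (x i)ᴴ * x i) = p ∧ (∑ i, (x i)ᴴ * x i) * c = p := by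
  classical
  letI := CStarAlgebra.spectralOrder A
  haveI := CStarAlgebra.spectralOrderedRing A
  set S := ∑ i, (x i)ᴴ * x i with hSdef
  constructor
  · intro hgen
    set Y : Matrix (Fin k) (Fin N) A := Matrix.of (fun i l => x i 0 l) with hYdef
    have hSY : S = Yᴴ * Y := by
      rw [hSdef]
      ext l m'
      rw [Matrix.sum_apply, Matrix.mul_apply]
      refine Finset.sum_congr rfl fun i _ => ?_
      rw [Matrix.mul_apply, Fin.sum_univ_one]
      simp [hYdef, Matrix.conjTranspose_apply]
    have hYp : Y * p = Y := by
      ext i l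
      have h := congrFun (congrFun (hx i) 0) l
      simpa [Matrix.mul_apply, hYdef] using h
    have hger : ∀ j : Fin N, ∃ a : Fin k → A,
        ∑ i, a i • x i = Matrix.of (fun _ l => p j l) := by
      intro j
      apply hgen
      ext r l
      have h := congrFun (congrFun hp j) l
      simpa [Matrix.mul_apply] using h
    choose B hB using hger
    set Bm : Matrix (Fin N) (Fin k) A := Matrix.of (fun j i => B j i) with hBmdef
    have hBY : Bm * Y = p := by
      ext j l
      have h := congrFun (congrFun (hB j) 0) l
      simpa [Matrix.mul_apply, Matrix.sum_apply, hYdef, hBmdef] using h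
    obtain ⟨M, hM⟩ := aux_B_bound (A := A) Bm
    set q : Matrix (Fin N) (Fin N) A := 1 - p with hqdef
    have hqq : q * q = q := by
      have h : (1 - p) * (1 - p) = 1 - p - p + p * p := by noncomm_ring
      rw [hqdef, h, hp]
      abel
    have hqH : qᴴ = q := by
      rw [hqdef, Matrix.conjTranspose_sub, Matrix.conjTranspose_one, hps]
    have hSH : Sᴴ = S := by
      rw [hSY, Matrix.conjTranspose_mul, Matrix.conjTranspose_conjTranspose]
    set T : Matrix (Fin N) (Fin N) A := M • S + q with hTdef
    have hTH : Tᴴ = T := by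
      rw [hTdef, Matrix.conjTranspose_add, Matrix.conjTranspose_nsmul, hSH, hqH]
    have hbd : ∀ v : Fin N → A, star v ⬝ᵥ v ≤ star v ⬝ᵥ (T *ᵥ v) := by
      intro v
      have hsum : p *ᵥ v + q *ᵥ v = v := by
        rw [hqdef, Matrix.sub_mulVec, Matrix.one_mulVec]
        abel
      have hsplit : star v ⬝ᵥ v = star v ⬝ᵥ (p *ᵥ v) + star v ⬝ᵥ (q *ᵥ v) := by
        rw [← dotProduct_add, hsum]
      have hpv : star v ⬝ᵥ (p *ᵥ v) = star (p *ᵥ v) ⬝ᵥ (p *ᵥ v) := by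
        have h := aux_polar p v
        rw [hps, hp] at h
        exact h.symm
      have hqv : star v ⬝ᵥ (q *ᵥ v) = star (q *ᵥ v) ⬝ᵥ (q *ᵥ v) := by
        have h := aux_polar q v
        rw [hqH, hqq] at h
        exact h.symm
      have hYv : star (p *ᵥ v) ⬝ᵥ (p *ᵥ v) ≤ M • (star v ⬝ᵥ (S *ᵥ v)) := by
        have h1 : p *ᵥ v = Bm *ᵥ (Y *ᵥ v) := by rw [Matrix.mulVec_mulVec, hBY]
        have h2 := hM (Y *ᵥ v)
        have h3 : star (Y *ᵥ v) ⬝ᵥ (Y *ᵥ v) = star v ⬝ᵥ (S *ᵥ v) := by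
          rw [aux_polar, ← hSY]
        rw [h1]
        rw [h3] at h2
        exact h2
      have hTv : star v ⬝ᵥ (T *ᵥ v)
          = M • (star v ⬝ᵥ (S *ᵥ v)) + star v ⬝ᵥ (q *ᵥ v) := by
        rw [hTdef, Matrix.add_mulVec, dotProduct_add,
          Matrix.smul_mulVec, dotProduct_smul]
      rw [hsplit, hTv, hpv]
      exact add_le_add_left hYv _
    obtain ⟨t, hTt, htT⟩ := aux_keyPos (A := A) N T hTH hbd
    have hSp : S * p = S := by rw [hSY, Matrix.mul_assoc, hYp]
    have hpS : p * S = S := by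
      have h := congrArg conjTranspose hSp
      rwa [Matrix.conjTranspose_mul, hSH, hps] at h
    have hpq : p * q = 0 := by
      rw [hqdef, Matrix.mul_sub, Matrix.mul_one, hp, sub_self]
    have hqp : q * p = 0 := by
      rw [hqdef, Matrix.sub_mul, Matrix.one_mul, hp, sub_self]
    have hpT : p * T = M • S := by
      rw [hTdef, mul_add, mul_smul_comm, hpS, hpq, add_zero]
    have hTp : T * p = M • S := by
      rw [hTdef, add_mul, smul_mul_assoc, hSp, hqp, add_zero]
    have hcomm : t * p = p * t := by
      calc t * p = t * p * (T * t) := by rw [hTt, mul_one]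
        _ = t * (p * T) * t := by noncomm_ring
        _ = t * (T * p) * t := by rw [hpT, hTp]
        _ = (t * T) * (p * t) := by noncomm_ring
        _ = p * t := by rw [htT, one_mul]
    have hptp : p * t * p = p * t := by
      calc p * t * p = p * (t * p) := by rw [mul_assoc]
        _ = p * (p * t) := by rw [hcomm]
        _ = (p * p) * t := by rw [mul_assoc]
        _ = p * t := by rw [hp]
    have hMS : (M • S : Matrix (Fin N) (Fin N) A) = T - q := by
      rw [hTdef]; abel
    refine ⟨M • (p * t * p), ?_, ?_, ?_⟩
    · rw [mul_smul_comm, smul_mul_assoc]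
      congr 1
      have hA : p * (p * t * p) = p * t * p := by
        rw [← mul_assoc, ← mul_assoc, hp]
      have hBp : (p * t * p) * p = p * t * p := by
        rw [mul_assoc (p * t) p p, hp]
      rw [hA, hBp]
    · -- c * S = p
      have h1 : (M • (p * t * p)) * S = M • (p * t * S) := by
        rw [smul_mul_assoc, mul_assoc, hpS]
      have h2 : (M : ℕ) • (p * t * S) = p * t * (M • S) := (mul_smul_comm M (p * t) S).symm
      have h3 : p * t * (T - q) = p := by
        rw [mul_sub]
        have h4 : p * t * T = p := by rw [mul_assoc, htT, mul_one]
        have h5 : p * t * q = 0 := by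
          rw [hqdef, mul_sub, mul_one, hptp, sub_self]
        rw [h4, h5, sub_zero]
      rw [h1, h2, hMS, h3]
    · -- S * c = p
      have h1 : S * (M • (p * t * p)) = M • (S * (t * p)) := by
        rw [mul_smul_comm]
        congr 1
        calc S * (p * t * p) = (S * p) * (t * p) := by noncomm_ring
          _ = S * (t * p) := by rw [hSp]
      have h2 : (M : ℕ) • (S * (t * p)) = (M • S) * (t * p) := (smul_mul_assoc M S (t * p)).symm
      have h3 : (T - q) * (t * p) = p := by
        rw [sub_mul]
        have h4 : T * (t * p) = p := by rw [← mul_assoc, hTt, one_mul]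
        have h5 : q * (t * p) = 0 := by
          rw [hcomm, ← mul_assoc, hqp, zero_mul]
        rw [h4, h5, sub_zero]
      rw [h1, h2, hMS, h3]
  · rintro ⟨c, hc, hcS, hSc⟩ v hv
    refine ⟨fun i => (v * c * (x i)ᴴ) 0 0, ?_⟩
    have hterm : ∀ i : Fin k,
        (v * c * (x i)ᴴ) 0 0 • x i = v * c * ((x i)ᴴ * x i) := by
      intro i
      ext r l
      rw [Subsingleton.elim r (0 : Fin 1)]
      rw [Matrix.smul_apply, smul_eq_mul, ← Matrix.mul_assoc,
        Matrix.mul_apply (M := v * c * (x i)ᴴ), Fin.sum_univ_one]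
    calc ∑ i, (v * c * (x i)ᴴ) 0 0 • x i
        = ∑ i, v * c * ((x i)ᴴ * x i) := Finset.sum_congr rfl fun i _ => hterm i
      _ = v * c * S := by rw [hSdef, Matrix.mul_sum]
      _ = v * (c * S) := Matrix.mul_assoc _ _ _
      _ = v * p := by rw [hcS]
      _ = v := hv
end

section
/- Let A be a unital C*-algebra, n, m ≥ 1, k ≥ 1, and x_1,…,x_{k+1} ∈ M_{n×m}(A). The following are equivalent: (a) there exist a_1,…,a_k ∈ M_n(A) such that ∑_{i=1}^k (x_i + a_i·x_{k+1})*(x_i + a_i·x_{k+1}) is invertible in M_m(A); (b) there exist y_1,…,y_{k+1} ∈ M_{n×m}(A) such that ∑_{i=1}^{k+1} y_i*x_i = 1 (the identity of M_m(A)) and ∑_{i=1}^k y_i*y_i is invertible in M_m(A). -/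
open Matrix

section WarfieldAux

section blocks
variable {R : Type*} [Ring R] {p q : Type*} [Fintype p] [DecidableEq p] [Fintype q] [DecidableEq q]

private lemma isUnit_of_mul_eq_one_both' {M N : Matrix p p R} (h1 : M * N = 1) (h2 : N * M = 1) :
    IsUnit M := ⟨⟨M, N, h1, h2⟩, rfl⟩

private lemma isUnit_fromBlocks_schur (Aa : Matrix p p R) (B : Matrix p q R) (C : Matrix q p R)
    (D D' : Matrix q q R) (G' : Matrix p p R) (hD : D * D' = 1) (hD' : D' * D = 1)
    (hG : (Aa - B * D' * C) * G' = 1) (hG' : G' * (Aa - B * D' * C) = 1) :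
    IsUnit (fromBlocks Aa B C D) := by
  set g := Aa - B * D' * C with hg
  have hdecomp : fromBlocks Aa B C D =
      fromBlocks 1 (B * D') 0 1 * (fromBlocks g 0 0 D * fromBlocks 1 0 (D' * C) 1) := by
    rw [fromBlocks_multiply, fromBlocks_multiply]
    simp only [Matrix.one_mul, Matrix.mul_one, Matrix.zero_mul, Matrix.mul_zero, add_zero,
      zero_add, Matrix.mul_assoc]
    rw [← Matrix.mul_assoc D D' C, hD, Matrix.one_mul, hD', Matrix.mul_one,
      ← Matrix.mul_assoc B D' C, hg, sub_add_cancel]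
  have u1 : IsUnit (fromBlocks (1 : Matrix p p R) (B * D') (0 : Matrix q p R) (1 : Matrix q q R)) := by
    apply isUnit_of_mul_eq_one_both' (N := fromBlocks (1 : Matrix p p R) (-(B * D')) (0 : Matrix q p R) (1 : Matrix q q R)) <;>
      · rw [fromBlocks_multiply]
        simp [fromBlocks_one]
  have u3 : IsUnit (fromBlocks (1 : Matrix p p R) (0 : Matrix p q R) (D' * C) (1 : Matrix q q R)) := by
    apply isUnit_of_mul_eq_one_both' (N := fromBlocks (1 : Matrix p p R) (0 : Matrix p q R) (-(D' * C)) (1 : Matrix q q R)) <;>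
      · rw [fromBlocks_multiply]
        simp [fromBlocks_one]
  have u2 : IsUnit (fromBlocks g (0 : Matrix p q R) (0 : Matrix q p R) D) := by
    apply isUnit_of_mul_eq_one_both' (N := fromBlocks G' (0 : Matrix p q R) (0 : Matrix q p R) D') <;>
      · rw [fromBlocks_multiply]
        simp [fromBlocks_one, hG, hG', hD, hD']
  rw [hdecomp]
  exact u1.mul (u2.mul u3)

lemma isUnit_of_submatrix_equiv' {e : p ≃ q} {M : Matrix q q R}
    (h : IsUnit (M.submatrix e e)) : IsUnit M := by
  obtain ⟨u, hu⟩ := h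
  have h1 : M.submatrix e e * (u⁻¹ : (Matrix p p R)ˣ).val = 1 := by rw [← hu]; exact u.mul_inv
  have h2 : (u⁻¹ : (Matrix p p R)ˣ).val * M.submatrix e e = 1 := by rw [← hu]; exact u.inv_mul
  have hM : (M.submatrix e e).submatrix e.symm e.symm = M := by
    simp [submatrix_submatrix]
  apply isUnit_of_mul_eq_one_both' (N := ((u⁻¹ : (Matrix p p R)ˣ).val).submatrix e.symm e.symm)
  · rw [← hM, submatrix_mul_equiv, h1, submatrix_one_equiv]
  · rw [← hM, submatrix_mul_equiv, h2, submatrix_one_equiv]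


end blocks


variable {A : Type*} [CStarAlgebra A] [PartialOrder A] [StarOrderedRing A]

private lemma scalar_key' {p : Type*} [Fintype p] (y z : p → A)
    (h : ∑ r, star (y r) * z r = 1) : IsUnit (∑ r, star (z r) * z r) := by
  set s := ∑ r, star (z r) * z r with hs
  set b := ∑ r, star (y r) * y r with hb
  have hb0 : 0 ≤ b := Finset.sum_nonneg fun r _ => star_mul_self_nonneg _
  have hzy : ∑ r, star (z r) * y r = 1 := by
    have := congrArg star h
    simpa [star_sum, StarMul.star_mul] using this
  set t : ℝ := (‖b‖ + 1)⁻¹ with ht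
  have htpos : 0 < t := by positivity
  set c : A := algebraMap ℝ A t with hc
  have hcsa : IsSelfAdjoint c := IsSelfAdjoint.algebraMap A (isSelfAdjoint_iff.mpr rfl)
  have hcstar : star c = c := hcsa.star_eq
  have hcomm : ∀ w : A, c * w = w * c := fun w => Algebra.commutes t w
  have expand : ∑ r, star (z r - c * y r) * (z r - c * y r) = s - c - c + c * b * c := by
    have : ∀ r, star (z r - c * y r) * (z r - c * y r)
        = star (z r) * z r - c * (star (z r) * y r) - c * (star (y r) * z r)
          + c * (star (y r) * y r) * c := by
      intro r
      rw [star_sub, StarMul.star_mul, hcstar, sub_mul, mul_sub, mul_sub]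
      rw [show star (z r) * (c * y r) = c * (star (z r) * y r) by
        rw [← mul_assoc, ← hcomm (star (z r)), mul_assoc]]
      rw [show star (y r) * c * z r = c * (star (y r) * z r) by
        rw [← hcomm (star (y r)), mul_assoc]]
      rw [show star (y r) * c * (c * y r) = c * (star (y r) * y r) * c by
        rw [← hcomm (star (y r)), hcomm (y r), mul_assoc, mul_assoc, mul_assoc]]
      abel
    rw [Finset.sum_congr rfl fun r _ => this r]
    simp only [Finset.sum_add_distrib, Finset.sum_sub_distrib, ← Finset.mul_sum, ← Finset.sum_mul,
      ← hs, ← hb, hzy, h, mul_one]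
  have key1 : c + c - c * b * c ≤ s := by
    have h0 : (0 : A) ≤ ∑ r, star (z r - c * y r) * (z r - c * y r) :=
      Finset.sum_nonneg fun r _ => star_mul_self_nonneg _
    rw [expand] at h0
    calc c + c - c * b * c = -(s - c - c + c * b * c) + s := by abel
    _ ≤ -0 + s := by gcongr
    _ = s := by abel
  have h2 : c * b * c ≤ c * algebraMap ℝ A ‖b‖ * c := by
    have := IsSelfAdjoint.conjugate_le_conjugate
      (IsSelfAdjoint.le_algebraMap_norm_self (IsSelfAdjoint.of_nonneg hb0)) (c := c) hcsa
    simpa [mul_assoc] using this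
  have h3 : c * algebraMap ℝ A ‖b‖ * c = algebraMap ℝ A (t * ‖b‖ * t) := by
    simp [_root_.map_mul, hc]
  set δ : ℝ := t + t - t * ‖b‖ * t with hδdef
  have h4 : algebraMap ℝ A δ ≤ s := by
    calc algebraMap ℝ A δ = c + c - algebraMap ℝ A (t * ‖b‖ * t) := by
          rw [hδdef, map_sub, map_add, ← hc, ← h3]
    _ ≤ c + c - c * b * c := by rw [← h3]; gcongr
    _ ≤ s := key1
  have hδpos : 0 < δ := by
    have hbn : 0 ≤ ‖b‖ := norm_nonneg b
    have h1 : t * ‖b‖ < 1 := by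
      rw [ht]
      rw [inv_mul_lt_iff₀ (by positivity)]
      linarith
    nlinarith
  refine CStarAlgebra.isUnit_of_le _ h4 (IsUnit.isStrictlyPositive ((hδpos.ne'.isUnit).map (algebraMap ℝ A)) ?_)
  have : algebraMap ℝ A δ = star (algebraMap ℝ A (Real.sqrt δ)) * algebraMap ℝ A (Real.sqrt δ) := by
    rw [(IsSelfAdjoint.algebraMap A (isSelfAdjoint_iff.mpr rfl)).star_eq, ← _root_.map_mul,
      Real.mul_self_sqrt hδpos.le]
  rw [this]; exact star_mul_self_nonneg _


variable {A : Type*} [CStarAlgebra A] [PartialOrder A] [StarOrderedRing A]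


private lemma gram_isUnit' : ∀ (M : ℕ) {p : Type*} [Fintype p] (Y Z : Matrix p (Fin M) A),
    Yᴴ * Z = 1 → IsUnit (Zᴴ * Z) := by
  intro M
  induction M with
  | zero =>
    intro p _ Y Z _
    exact isUnit_of_mul_eq_one_both' (N := 1) (by ext i j; exact i.elim0)
      (by ext i j; exact i.elim0)
  | succ M ih =>
    intro p _ Y Z h
    set s := Zᴴ * Z with hs
    have hsentry : ∀ i' j', s i' j' = ∑ r, star (Z r i') * Z r j' := by
      intro i' j'; simp [hs, mul_apply, conjTranspose_apply]
    have hYZ : ∀ i' j', (∑ r, star (Y r i') * Z r j') = if i' = j' then (1 : A) else 0 := by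
      intro i' j'
      have := congrFun (congrFun h i') j'
      simpa [mul_apply, conjTranspose_apply, one_apply] using this
    have hsym : ∀ i' j', star (s i' j') = s j' i' := by
      intro i' j'
      rw [hsentry, hsentry, star_sum]
      refine Finset.sum_congr rfl fun r _ => by rw [StarMul.star_mul, star_star]
    set α := s (Fin.last M) (Fin.last M) with hα
    have hαunit : IsUnit α := by
      have := scalar_key' (fun r => Y r (Fin.last M)) (fun r => Z r (Fin.last M))
        (by rw [hYZ]; simp)
      rwa [← hsentry] at this
    obtain ⟨v, hv⟩ := hαunit
    set α' := ((v⁻¹ : Aˣ) : A) with hα'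
    have hαα' : α * α' = 1 := by rw [← hv]; exact v.mul_inv
    have hα'α : α' * α = 1 := by rw [← hv]; exact v.inv_mul
    have hαsa : star α = α := hsym _ _
    have hα'star : star α' = α' := by
      have h1 : star α' * α = 1 := by
        rw [← hαsa, ← StarMul.star_mul, hαα', star_one]
      calc star α' = star α' * (α * α') := by rw [hαα', mul_one]
      _ = (star α' * α) * α' := by rw [mul_assoc]
      _ = α' := by rw [h1, one_mul]
    set β : Fin M → A := fun j => α' * s (Fin.last M) j.castSucc with hβ
    set Z' : Matrix p (Fin M) A :=
      Matrix.of fun r j => Z r j.castSucc - Z r (Fin.last M) * β j with hZ'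
    set Y' : Matrix p (Fin M) A := Matrix.of fun r j => Y r j.castSucc with hY'
    have hY'Z' : Y'ᴴ * Z' = 1 := by
      ext i j
      have : ∀ r, star (Y r i.castSucc) * (Z r j.castSucc - Z r (Fin.last M) * β j)
          = star (Y r i.castSucc) * Z r j.castSucc
            - (star (Y r i.castSucc) * Z r (Fin.last M)) * β j := by
        intro r; rw [mul_sub, mul_assoc]
      simp only [mul_apply, conjTranspose_apply, hZ', hY', Matrix.of_apply]
      rw [Finset.sum_congr rfl fun r _ => this r, Finset.sum_sub_distrib, ← Finset.sum_mul,
        hYZ, hYZ]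
      have h1 : i.castSucc ≠ Fin.last M := (Fin.castSucc_lt_last i).ne
      rw [if_neg h1, zero_mul, sub_zero, one_apply]
      simp [Fin.castSucc_inj]
    have hIH := ih Y' Z' hY'Z'
    set g := Z'ᴴ * Z' with hg
    have hstarβ : ∀ i : Fin M, star (β i) = s i.castSucc (Fin.last M) * α' := by
      intro i
      rw [hβ]; rw [StarMul.star_mul, hα'star, hsym]
    have hgentry : ∀ i j, g i j = s i.castSucc j.castSucc
        - s i.castSucc (Fin.last M) * α' * s (Fin.last M) j.castSucc := by
      intro i j
      have hterm : ∀ r, star (Z' r i) * Z' r j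
          = star (Z r i.castSucc) * Z r j.castSucc
            - (star (Z r i.castSucc) * Z r (Fin.last M)) * β j
            - (s i.castSucc (Fin.last M) * α') * (star (Z r (Fin.last M)) * Z r j.castSucc)
            + ((s i.castSucc (Fin.last M) * α') * (star (Z r (Fin.last M)) * Z r (Fin.last M)))
              * β j := by
        intro r
        simp only [hZ', Matrix.of_apply, star_sub, StarMul.star_mul, hstarβ]
        noncomm_ring
      have : g i j = ∑ r, star (Z' r i) * Z' r j := by
        simp [hg, mul_apply, conjTranspose_apply]
      rw [this, Finset.sum_congr rfl fun r _ => hterm r]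
      rw [Finset.sum_add_distrib, Finset.sum_sub_distrib, Finset.sum_sub_distrib,
        ← Finset.sum_mul, ← Finset.sum_mul, ← Finset.mul_sum, ← Finset.mul_sum,
        ← hsentry, ← hsentry, ← hsentry, ← hsentry]
      rw [show s i.castSucc (Fin.last M) * α' * s (Fin.last M) (Fin.last M) * β j
          = s i.castSucc (Fin.last M) * β j by
        rw [mul_assoc (s i.castSucc (Fin.last M)) α', ← hα, hα'α, mul_one]]
      rw [hβ]
      noncomm_ring
    -- assemble the block matrix
    obtain ⟨w, hw⟩ := hIH
    have hge : (Matrix.of fun i j => s i.castSucc j.castSucc)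
        - (Matrix.of fun i (_ : Fin 1) => s i.castSucc (Fin.last M))
          * (Matrix.of fun (_ _ : Fin 1) => α')
          * (Matrix.of fun (_ : Fin 1) j => s (Fin.last M) j.castSucc) = g := by
      ext i j
      simp only [Matrix.sub_apply, Matrix.mul_apply, Matrix.of_apply, Fin.sum_univ_one]
      rw [hgentry]
    have hDD' : (Matrix.of fun (_ _ : Fin 1) => α) * (Matrix.of fun (_ _ : Fin 1) => α') = 1 := by
      ext i j
      simp [Matrix.mul_apply, Matrix.one_apply, hαα', Fin.sum_univ_one, Subsingleton.elim i j]
    have hD'D : (Matrix.of fun (_ _ : Fin 1) => α') * (Matrix.of fun (_ _ : Fin 1) => α) = 1 := by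
      ext i j
      simp [Matrix.mul_apply, Matrix.one_apply, hα'α, Fin.sum_univ_one, Subsingleton.elim i j]
    have hsub : s.submatrix finSumFinEquiv finSumFinEquiv =
        fromBlocks (Matrix.of fun i j => s i.castSucc j.castSucc)
          (Matrix.of fun i (_ : Fin 1) => s i.castSucc (Fin.last M))
          (Matrix.of fun (_ : Fin 1) j => s (Fin.last M) j.castSucc)
          (Matrix.of fun (_ _ : Fin 1) => α) := by
      have he1 : ∀ i : Fin M, (finSumFinEquiv (Sum.inl i) : Fin (M + 1)) = i.castSucc := by
        intro i; ext; simp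
      have he2 : ∀ j : Fin 1, (finSumFinEquiv (Sum.inr j) : Fin (M + 1)) = Fin.last M := by
        intro j; ext; simp [Fin.last, Fin.eq_zero j]
      ext (i | i) (j | j) <;>
        simp [submatrix_apply, he1, he2, fromBlocks_apply₁₁, fromBlocks_apply₁₂,
          fromBlocks_apply₂₁, fromBlocks_apply₂₂, hα]
    refine isUnit_of_submatrix_equiv' (e := finSumFinEquiv) ?_
    rw [hsub]
    refine isUnit_fromBlocks_schur _ _ _ _ (Matrix.of fun (_ _ : Fin 1) => α')
      (w⁻¹ : (Matrix (Fin M) (Fin M) A)ˣ).val hDD' hD'D ?_ ?_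
    · rw [hge, ← hw]; exact w.mul_inv
    · rw [hge, ← hw]; exact w.inv_mul

end WarfieldAux

section WarfieldMain
variable {A : Type*} [CStarAlgebra A]

variable {A : Type*} [CStarAlgebra A]

private lemma stack_mul {k n m : ℕ} (u v : Fin k → Matrix (Fin n) (Fin m) A) :
    (Matrix.of fun (rp : Fin k × Fin n) (j : Fin m) => u rp.1 rp.2 j)ᴴ *
      (Matrix.of fun (rp : Fin k × Fin n) (j : Fin m) => v rp.1 rp.2 j)
      = ∑ i, (u i)ᴴ * v i := by
  ext i j
  simp only [mul_apply, conjTranspose_apply, Matrix.of_apply, Matrix.sum_apply,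
    Fintype.sum_prod_type]

private theorem warfield_condition_matrix_aux
    (n m k : ℕ) (x : Fin (k + 1) → Matrix (Fin n) (Fin m) A) :
    (∃ a : Fin k → Matrix (Fin n) (Fin n) A,
        IsUnit (∑ i : Fin k, (x i.castSucc + a i * x (Fin.last k))ᴴ *
          (x i.castSucc + a i * x (Fin.last k)))) ↔
      ∃ y : Fin (k + 1) → Matrix (Fin n) (Fin m) A,
        (∑ i, (y i)ᴴ * x i) = 1 ∧
          IsUnit (∑ i : Fin k, (y i.castSucc)ᴴ * y i.castSucc) := by
  letI : PartialOrder A := CStarAlgebra.spectralOrder A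
  letI : StarOrderedRing A := CStarAlgebra.spectralOrderedRing A
  constructor
  · rintro ⟨a, ha⟩
    set z : Fin k → Matrix (Fin n) (Fin m) A :=
      fun i => x i.castSucc + a i * x (Fin.last k) with hzdef
    set S := ∑ i : Fin k, (z i)ᴴ * z i with hSdef
    obtain ⟨u, hu⟩ := ha
    set T := (u⁻¹ : (Matrix (Fin m) (Fin m) A)ˣ).val with hTdef
    have hST : S * T = 1 := by rw [← hu]; exact u.mul_inv
    have hTS : T * S = 1 := by rw [← hu]; exact u.inv_mul
    have hSH : Sᴴ = S := by
      rw [hSdef, conjTranspose_sum]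
      exact Finset.sum_congr rfl fun i _ => by
        rw [conjTranspose_mul, conjTranspose_conjTranspose]
    have hTH : Tᴴ = T := by
      have h1 : Tᴴ * S = 1 := by
        rw [← hSH, ← conjTranspose_mul, hST, conjTranspose_one]
      calc Tᴴ = Tᴴ * (S * T) := by rw [hST, Matrix.mul_one]
      _ = (Tᴴ * S) * T := by rw [Matrix.mul_assoc]
      _ = T := by rw [h1, Matrix.one_mul]
    have hx : ∀ i : Fin k, x i.castSucc = z i - a i * x (Fin.last k) := by
      intro i; rw [hzdef]; simp
    refine ⟨Fin.lastCases ((∑ i : Fin k, (a i)ᴴ * z i) * T) (fun i => z i * T), ?_, ?_⟩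
    · rw [Fin.sum_univ_castSucc]
      simp only [Fin.lastCases_last, Fin.lastCases_castSucc]
      set C := ∑ i : Fin k, (z i)ᴴ * a i with hCdef
      have e1 : ∀ i : Fin k, (z i * T)ᴴ * x i.castSucc
          = T * ((z i)ᴴ * z i) - T * ((z i)ᴴ * a i) * x (Fin.last k) := by
        intro i
        rw [conjTranspose_mul, hTH, hx i, Matrix.mul_sub]
        simp only [Matrix.mul_assoc]
      have e1' : ∑ i : Fin k, (z i * T)ᴴ * x i.castSucc
          = T * S - T * C * x (Fin.last k) := by
        rw [Finset.sum_congr rfl fun i _ => e1 i, Finset.sum_sub_distrib,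
          ← Finset.mul_sum, ← Matrix.sum_mul, ← Matrix.mul_sum, ← hSdef, ← hCdef]
      have e2 : ((∑ i : Fin k, (a i)ᴴ * z i) * T)ᴴ * x (Fin.last k)
          = T * C * x (Fin.last k) := by
        rw [conjTranspose_mul, hTH, conjTranspose_sum]
        congr 2
        rw [hCdef]
        exact Finset.sum_congr rfl fun i _ => by
          rw [conjTranspose_mul, conjTranspose_conjTranspose]
      rw [e1', e2, sub_add_cancel, hTS]
    · simp only [Fin.lastCases_castSucc]
      have : ∀ i : Fin k, (z i * T)ᴴ * (z i * T) = T * ((z i)ᴴ * z i) * T := by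
        intro i
        rw [conjTranspose_mul, hTH, Matrix.mul_assoc, Matrix.mul_assoc, Matrix.mul_assoc]
      rw [Finset.sum_congr rfl fun i _ => this i, ← Finset.sum_mul, ← Finset.mul_sum, ← hSdef,
        Matrix.mul_assoc, hST, Matrix.mul_one]
      exact ⟨u⁻¹, rfl⟩
  · rintro ⟨y, hy1, hy2⟩
    set T := ∑ i : Fin k, (y i.castSucc)ᴴ * y i.castSucc with hTdef
    obtain ⟨u, hu⟩ := hy2
    set T' := (u⁻¹ : (Matrix (Fin m) (Fin m) A)ˣ).val with hT'def
    have hTT' : T * T' = 1 := by rw [← hu]; exact u.mul_inv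
    set a : Fin k → Matrix (Fin n) (Fin n) A :=
      fun i => y i.castSucc * T' * (y (Fin.last k))ᴴ with hadef
    set z : Fin k → Matrix (Fin n) (Fin m) A :=
      fun i => x i.castSucc + a i * x (Fin.last k) with hzdef
    have claim : ∑ i : Fin k, (y i.castSucc)ᴴ * z i = 1 := by
      have expand : ∀ i : Fin k, (y i.castSucc)ᴴ * z i
          = (y i.castSucc)ᴴ * x i.castSucc
            + ((y i.castSucc)ᴴ * y i.castSucc) * (T' * ((y (Fin.last k))ᴴ * x (Fin.last k))) := by
        intro i
        rw [hzdef]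
        simp only []
        rw [Matrix.mul_add]
        congr 1
        rw [hadef]
        simp only [Matrix.mul_assoc]
      rw [Finset.sum_congr rfl fun i _ => expand i, Finset.sum_add_distrib, ← Finset.sum_mul,
        ← hTdef]
      have h1 : ∑ i : Fin k, (y i.castSucc)ᴴ * x i.castSucc
          = 1 - (y (Fin.last k))ᴴ * x (Fin.last k) := by
        rw [Fin.sum_univ_castSucc] at hy1
        rw [← hy1]; abel
      rw [h1, ← Matrix.mul_assoc, hTT', Matrix.one_mul]
      abel
    refine ⟨a, ?_⟩
    have hstack := stack_mul (A := A) (fun i => y i.castSucc) z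
    have hgram := gram_isUnit' m
      (Matrix.of fun (rp : Fin k × Fin n) (j : Fin m) => y (rp.1).castSucc rp.2 j)
      (Matrix.of fun (rp : Fin k × Fin n) (j : Fin m) => z rp.1 rp.2 j)
      (by rw [hstack, claim])
    rw [stack_mul] at hgram
    exact hgram


end WarfieldMain

/-- Warfield condition for matrix modules.  Let `A` be a unital
C⋆-algebra, `n, m, k ≥ 1`, and `x₁, …, x_{k+1} ∈ M_{n×m}(A)`.  The following are
equivalent: (a) there are `a₁, …, a_k ∈ M_n(A)` such that
`∑ᵢ (xᵢ + aᵢ x_{k+1})ᴴ (xᵢ + aᵢ x_{k+1})` is invertible in `M_m(A)`; (b) there are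
`y₁, …, y_{k+1} ∈ M_{n×m}(A)` with `∑ᵢ yᵢᴴ xᵢ = 1` and `∑_{i≤k} yᵢᴴ yᵢ` invertible in
`M_m(A)`. -/
theorem warfield_condition_matrix (A : Type*) [CStarAlgebra A]
    (n m k : ℕ) (hn : 1 ≤ n) (hm : 1 ≤ m) (hk : 1 ≤ k)
    (x : Fin (k + 1) → Matrix (Fin n) (Fin m) A) :
    (∃ a : Fin k → Matrix (Fin n) (Fin n) A,
        IsUnit (∑ i : Fin k, (x i.castSucc + a i * x (Fin.last k))ᴴ *
          (x i.castSucc + a i * x (Fin.last k)))) ↔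
      ∃ y : Fin (k + 1) → Matrix (Fin n) (Fin m) A,
        (∑ i, (y i)ᴴ * x i) = 1 ∧
          IsUnit (∑ i : Fin k, (y i.castSucc)ᴴ * y i.castSucc) := by
  exact warfield_condition_matrix_aux n m k x
end

section
/- Let A be a unital C*-algebra, N ≥ 1, p ∈ M_N(A) a projection, X = A^N·p = {x ∈ M_{1×N}(A) : x·p = x}, k ≥ 1, and x_1,…,x_{k+1} ∈ X. The following are equivalent: (a) there exist a_1,…,a_k ∈ A such that ∑_{i=1}^k (x_i + a_i·x_{k+1})*(x_i + a_i·x_{k+1}) is invertible in the corner pM_N(A)p; (b) there exist y_1,…,y_{k+1} ∈ X such that ∑_{i=1}^{k+1} y_i*x_i = p and ∑_{i=1}^k y_i*y_i is invertible in the corner pM_N(A)p. -/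
open Matrix

/-- An element `b` of the corner `p M_N(A) p` is invertible in the corner if there is
`c ∈ p M_N(A) p` with `c * b = p = b * c`. -/
def CornerIsUnit {A : Type*} [Ring A] {N : ℕ}
    (p b : Matrix (Fin N) (Fin N) A) : Prop :=
  ∃ c : Matrix (Fin N) (Fin N) A, c = p * c * p ∧ c * b = p ∧ b * c = p

section WarfieldAux

variable {A : Type*} [CStarAlgebra A]

/-- In a unital C⋆-algebra, `‖∑ aᵢ * star aᵢ‖ - ∑ aᵢ * star aᵢ` is a `star r * r`. -/
lemma exists_star_mul_self_eq_algebraMap_norm_sub {ι : Type*} [Fintype ι] (a : ι → A) :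
    ∃ r : A, star r * r =
      algebraMap ℝ A ‖∑ i, a i * star (a i)‖ - ∑ i, a i * star (a i) := by
  let _ := CStarAlgebra.spectralOrder A
  have _ := CStarAlgebra.spectralOrderedRing A
  set t : A := ∑ i, a i * star (a i) with ht
  have htsa : IsSelfAdjoint t := by
    refine Finset.sum_induction _ _ (fun x y hx hy => hx.add hy) (IsSelfAdjoint.zero A)
      fun i _ => IsSelfAdjoint.mul_star_self (a i)
  have htnn : 0 ≤ t := Finset.sum_nonneg fun i _ => mul_star_self_nonneg (a i)
  set s : A := algebraMap ℝ A ‖t‖ - t with hs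
  have hsnn : 0 ≤ s := sub_nonneg.mpr (IsSelfAdjoint.le_algebraMap_norm_self htsa)
  have hssa : IsSelfAdjoint s := by
    refine IsSelfAdjoint.sub ?_ htsa
    rw [Algebra.algebraMap_eq_smul_one]
    exact (IsSelfAdjoint.all _).smul (IsSelfAdjoint.one A)
  have hres : SpectrumRestricts s ContinuousMap.realToNNReal := by
    rw [SpectrumRestricts.nnreal_iff]
    exact fun x hx => spectrum_nonneg_of_nonneg hsnn hx
  obtain ⟨r, hr1, hr3⟩ : ∃ r : A, IsSelfAdjoint r ∧ r ^ 2 = s :=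
    ⟨CFC.sqrt s, (CFC.sqrt_nonneg s).isSelfAdjoint, by rw [sq, CFC.sqrt_mul_sqrt_self s hsnn]⟩
  exact ⟨r, by rw [hr1.star_eq, ← sq, hr3]⟩


lemma isUnit_smul_one_add_sum_star_mul_self {ι : Type*} [Fintype ι]
    {ν : ℝ} (hν : 0 < ν) (c : ι → A) :
    IsUnit (ν • (1 : A) + ∑ i, star (c i) * c i) := by
  let _ := CStarAlgebra.spectralOrder A
  have _ := CStarAlgebra.spectralOrderedRing A
  set t : A := ∑ i, star (c i) * c i with ht
  have htnn : 0 ≤ t := Finset.sum_nonneg fun i _ => star_mul_self_nonneg (c i)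
  have hmem : (-ν) ∉ spectrum ℝ t := by
    intro hmem
    have := spectrum_nonneg_of_nonneg htnn hmem
    linarith
  rw [spectrum.notMem_iff] at hmem
  have : algebraMap ℝ A (-ν) - t = -(ν • (1:A) + t) := by
    rw [Algebra.algebraMap_eq_smul_one]
    rw [neg_smul]; abel
  rw [this] at hmem
  simpa using hmem.neg

/-- invertibility of 1×1 matrices -/
lemma one_by_one_inv {α : Matrix (Fin 1) (Fin 1) A} (h : IsUnit (α 0 0)) :
    ∃ α' : Matrix (Fin 1) (Fin 1) A, α * α' = 1 ∧ α' * α = 1 := by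
  obtain ⟨u, hu⟩ := h
  refine ⟨Matrix.of fun _ _ => ↑u⁻¹, ?_, ?_⟩ <;>
  · ext a b
    obtain rfl : a = 0 := Subsingleton.elim a 0
    obtain rfl : b = 0 := Subsingleton.elim b 0
    simp [Matrix.mul_apply, Matrix.one_apply, hu]

set_option maxHeartbeats 1000000 in
/-- Key invertibility lemma: `1 + ∑ vⱼᴴ vⱼ` is invertible in `M_N(A)`. -/
lemma isUnit_one_add_sum_conjTranspose_mul_self :
    ∀ (N : ℕ) {J : Type*} [Fintype J] (v : J → Matrix (Fin 1) (Fin N) A),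
      IsUnit ((1 : Matrix (Fin N) (Fin N) A) + ∑ j, (v j)ᴴ * v j) := by
  intro N
  induction N with
  | zero =>
    intro J _ v
    exact isUnit_of_subsingleton _
  | succ N IH =>
    intro J _ v
    set e : Fin 1 ⊕ Fin N ≃ Fin (N+1) := finSumFinEquiv.trans (finCongr (Nat.add_comm 1 N)) with he
    set Φ := Matrix.reindexAlgEquiv ℕ A e with hΦ
    set c : J → Matrix (Fin 1) (Fin 1) A := fun j => Matrix.of fun l a => v j l (e (Sum.inl a))
      with hc
    set d : J → Matrix (Fin 1) (Fin N) A := fun j => Matrix.of fun l i => v j l (e (Sum.inr i))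
      with hd
    set α : Matrix (Fin 1) (Fin 1) A := 1 + ∑ j, (c j)ᴴ * c j with hα
    set β : Matrix (Fin 1) (Fin N) A := ∑ j, (c j)ᴴ * d j with hβ
    set δ : Matrix (Fin N) (Fin N) A := 1 + ∑ j, (d j)ᴴ * d j with hδ
    have hkey : (1 : Matrix (Fin (N+1)) (Fin (N+1)) A) + ∑ j, (v j)ᴴ * v j =
        Φ (fromBlocks α β βᴴ δ) := by
      have : ∀ X : Matrix (Fin 1 ⊕ Fin N) (Fin 1 ⊕ Fin N) A,
          Φ X = Matrix.of fun a b => X (e.symm a) (e.symm b) := by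
        intro X; rfl
      rw [this]
      ext a b
      rcases hsa : e.symm a with i | i <;> rcases hsb : e.symm b with i' | i' <;>
        · have ha' : a = e (e.symm a) := (Equiv.apply_symm_apply e a).symm
          have hb' : b = e (e.symm b) := (Equiv.apply_symm_apply e b).symm
          rw [hsa] at ha'; rw [hsb] at hb'
          subst ha'; subst hb'
          simp [Matrix.mul_apply, Matrix.one_apply, Matrix.sum_apply, hα, hβ, hδ, hc, hd,
            Matrix.conjTranspose_apply, EmbeddingLike.apply_eq_iff_eq, Finset.mul_sum,
            Finset.sum_comm (γ := J)]
    rw [hkey]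
    -- invert α
    have hα00 : IsUnit (α 0 0) := by
      have := isUnit_smul_one_add_sum_star_mul_self (A := A) (ι := J) one_pos
        (fun j => c j 0 0)
      convert this using 1
      simp [hα, Matrix.sum_apply, Matrix.mul_apply, Matrix.one_apply]
    obtain ⟨α', hαα', hα'α⟩ := one_by_one_inv hα00
    have hαsa : αᴴ = α := by
      simp [hα, conjTranspose_add, Matrix.conjTranspose_sum, Matrix.conjTranspose_mul]
    set g : Matrix (Fin 1) (Fin N) A := α' * β with hg
    have hβg : α * g = β := by rw [hg, ← Matrix.mul_assoc, hαα', Matrix.one_mul]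
    set S : Matrix (Fin N) (Fin N) A := δ - βᴴ * g with hS
    have hbg : βᴴ * g = gᴴ * (α * g) := by
      conv_lhs => rw [← hβg]
      rw [Matrix.conjTranspose_mul, hαsa, Matrix.mul_assoc]
    have hβ2 : β = g + (∑ j, (c j)ᴴ * c j) * g := by
      rw [← hβg, hα, Matrix.add_mul, Matrix.one_mul]
    -- S = 1 + ∑ EᴴE + gᴴg
    have hsum : ∑ j : J, (d j - c j * g)ᴴ * (d j - c j * g) =
        (∑ j, (d j)ᴴ * d j) - βᴴ * g - gᴴ * β + gᴴ * ((∑ j, (c j)ᴴ * c j) * g) := by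
      have expand : ∀ j : J, (d j - c j * g)ᴴ * (d j - c j * g) =
          (d j)ᴴ * d j - ((c j)ᴴ * d j)ᴴ * g - gᴴ * ((c j)ᴴ * d j) +
            gᴴ * ((c j)ᴴ * c j * g) := by
        intro j
        simp only [Matrix.conjTranspose_sub, Matrix.conjTranspose_mul,
          conjTranspose_conjTranspose, Matrix.sub_mul, Matrix.mul_sub, Matrix.mul_assoc]
        abel
      rw [Finset.sum_congr rfl fun j _ => expand j]
      rw [Finset.sum_add_distrib, Finset.sum_sub_distrib, Finset.sum_sub_distrib]
      simp only [hβ, Matrix.conjTranspose_sum, Matrix.sum_mul, Matrix.mul_sum]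
    have hScert : S = 1 + ∑ j' : J ⊕ Fin 1,
        ((Sum.elim (fun j => d j - c j * g) (fun _ => g) j')ᴴ *
          (Sum.elim (fun j => d j - c j * g) (fun _ => g) j')) := by
      rw [Fintype.sum_sum_type]
      simp only [Sum.elim_inl, Sum.elim_inr, Finset.sum_const, Finset.card_univ,
        Fintype.card_fin, one_smul]
      rw [hsum, hS, hδ]
      have : gᴴ * β = gᴴ * g + gᴴ * ((∑ j, (c j)ᴴ * c j) * g) := by
        rw [hβ2, Matrix.mul_add]
      rw [this]
      abel
    have hSunit : IsUnit S := by
      rw [hScert]; exact IH _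
    obtain ⟨us, hus⟩ := hSunit
    set S' : Matrix (Fin N) (Fin N) A := Units.val us⁻¹ with hS'
    have hSS' : S * S' = 1 := by rw [hS', ← hus]; exact us.mul_inv
    have hS'S : S' * S = 1 := by rw [hS', ← hus]; exact us.inv_mul
    -- factorization
    have hfact : fromBlocks α β βᴴ δ =
        (fromBlocks 1 0 (βᴴ * α') 1 : Matrix (Fin 1 ⊕ Fin N) (Fin 1 ⊕ Fin N) A) *
          fromBlocks α 0 0 S * fromBlocks 1 g 0 1 := by
      have hδ2 : βᴴ * g + S = δ := by rw [hS]; abel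
      rw [Matrix.fromBlocks_multiply, Matrix.fromBlocks_multiply]
      simp only [Matrix.one_mul, Matrix.mul_one, Matrix.zero_mul, Matrix.mul_zero,
        add_zero, zero_add, Matrix.mul_assoc, hα'α]
      rw [hβg, ← hδ2]
    have hL : IsUnit (fromBlocks 1 0 (βᴴ * α') 1 : Matrix (Fin 1 ⊕ Fin N) (Fin 1 ⊕ Fin N) A) := by
      refine isUnit_iff_exists.mpr ⟨fromBlocks 1 0 (-(βᴴ * α')) 1, ?_, ?_⟩ <;>
        · rw [Matrix.fromBlocks_multiply, ← Matrix.fromBlocks_one]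
          simp
    have hU : IsUnit (fromBlocks 1 g 0 1 : Matrix (Fin 1 ⊕ Fin N) (Fin 1 ⊕ Fin N) A) := by
      refine isUnit_iff_exists.mpr ⟨fromBlocks 1 (-g) 0 1, ?_, ?_⟩ <;>
        · rw [Matrix.fromBlocks_multiply, ← Matrix.fromBlocks_one]
          simp
    have hD : IsUnit (fromBlocks α 0 0 S : Matrix (Fin 1 ⊕ Fin N) (Fin 1 ⊕ Fin N) A) := by
      refine isUnit_iff_exists.mpr ⟨fromBlocks α' 0 0 S', ?_, ?_⟩ <;>
        · rw [Matrix.fromBlocks_multiply, ← Matrix.fromBlocks_one]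
          simp [hαα', hα'α, hSS', hS'S]
    rw [hfact]
    exact ((hL.mul hD).mul hU).map Φ

section layer2

variable {N : ℕ}

lemma isUnit_smul_one_add_sum {J : Type*} [Fintype J] {μ : ℝ} (hμ : 0 < μ)
    (v : J → Matrix (Fin 1) (Fin N) A)
    (hkey : ∀ (w : J → Matrix (Fin 1) (Fin N) A),
      IsUnit ((1 : Matrix (Fin N) (Fin N) A) + ∑ j, (w j)ᴴ * w j)) :
    IsUnit (μ • (1 : Matrix (Fin N) (Fin N) A) + ∑ j, (v j)ᴴ * v j) := by
  have key := hkey (fun j => (Real.sqrt μ)⁻¹ • v j)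
  have hc : μ * ((Real.sqrt μ)⁻¹ * (Real.sqrt μ)⁻¹) = 1 := by
    rw [← mul_inv, Real.mul_self_sqrt hμ.le, mul_inv_cancel₀ hμ.ne']
  have heq : μ • ((1 : Matrix (Fin N) (Fin N) A) +
      ∑ j, ((Real.sqrt μ)⁻¹ • v j)ᴴ * ((Real.sqrt μ)⁻¹ • v j)) =
      μ • (1 : Matrix (Fin N) (Fin N) A) + ∑ j, (v j)ᴴ * v j := by
    simp only [Matrix.conjTranspose_smul, star_trivial, Matrix.smul_mul, Matrix.mul_smul,
      smul_smul, smul_add, Finset.smul_sum, hc, one_smul]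
  rw [← heq]
  have : (μ • (1 : Matrix (Fin N) (Fin N) A)) = algebraMap ℝ _ μ := by
    rw [Algebra.algebraMap_eq_smul_one]
  have hμu : IsUnit (μ • (1 : Matrix (Fin N) (Fin N) A)) := by
    rw [this]
    exact (isUnit_iff_ne_zero.mpr hμ.ne').map (algebraMap ℝ (Matrix (Fin N) (Fin N) A))
  have := hμu.mul key
  rwa [smul_mul_assoc, one_mul] at this

lemma cornerIsUnit_of_isUnit {p b : Matrix (Fin N) (Fin N) A} (hp : p * p = p)
    (hpb : p * b = b) (hbp : b * p = b)
    (h : IsUnit (b + (1 - p))) : CornerIsUnit p b := by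
  obtain ⟨u, hu⟩ := h
  set u' : Matrix (Fin N) (Fin N) A := Units.val u⁻¹ with hu'
  have hph : p * (b + (1 - p)) = b := by
    rw [Matrix.mul_add, Matrix.mul_sub, Matrix.mul_one, hp, hpb, sub_self, add_zero]
  have hhp : (b + (1 - p)) * p = b := by
    rw [Matrix.add_mul, Matrix.sub_mul, Matrix.one_mul, hp, hbp, sub_self, add_zero]
  have hui : u' * (b + (1 - p)) = 1 := by rw [hu', ← hu]; exact u.inv_mul
  have hui' : (b + (1 - p)) * u' = 1 := by rw [hu', ← hu]; exact u.mul_inv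
  refine ⟨p * u' * p, ?_, ?_, ?_⟩
  · rw [← mul_assoc, ← mul_assoc, hp, mul_assoc (p * u'), hp]
  · calc p * u' * p * b = p * u' * (p * b) := by rw [mul_assoc]
      _ = p * u' * b := by rw [hpb]
      _ = p * u' * ((b + (1 - p)) * p) := by rw [hhp]
      _ = p * (u' * (b + (1 - p))) * p := by
          rw [← mul_assoc, mul_assoc p u' (b + (1 - p))]
      _ = p := by rw [hui, mul_one, hp]
  · calc b * (p * u' * p) = b * p * u' * p := by rw [← mul_assoc, ← mul_assoc]
      _ = b * u' * p := by rw [hbp]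
      _ = p * (b + (1 - p)) * u' * p := by rw [hph]
      _ = p * ((b + (1 - p)) * u') * p := by rw [mul_assoc p (b + (1 - p)) u']
      _ = p := by rw [hui', mul_one, hp]

lemma rows_decomp (X : Matrix (Fin N) (Fin N) A) :
    Xᴴ * X = ∑ r : Fin N, (Matrix.of fun (_ : Fin 1) j => X r j)ᴴ *
      (Matrix.of fun (_ : Fin 1) j => X r j) := by
  ext a b
  simp [Matrix.mul_apply, Matrix.sum_apply, Matrix.conjTranspose_apply]

lemma sqrt_smul_cert (c : ℝ) (hc : 0 ≤ c) (X : Matrix (Fin 1) (Fin N) A) :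
    (Real.sqrt c • X)ᴴ * (Real.sqrt c • X) = c • (Xᴴ * X) := by
  simp [Matrix.conjTranspose_smul, star_trivial, Matrix.smul_mul, Matrix.mul_smul,
    smul_smul, Real.mul_self_sqrt hc]

lemma row_conj_smul (a : A) (u w : Matrix (Fin 1) (Fin N) A) :
    uᴴ * (a • w) = ((star a) • u)ᴴ * w := by
  ext i j
  simp [Matrix.mul_apply, Matrix.conjTranspose_apply, mul_assoc]

lemma row_smul_conj (a : A) (w : Matrix (Fin 1) (Fin N) A) :
    (a • w)ᴴ * (a • w) = wᴴ * ((star a * a) • w) := by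
  ext i j
  simp [Matrix.mul_apply, Matrix.conjTranspose_apply, mul_assoc]

lemma entry_smul_row {n : Type*} [Fintype n] (M : Matrix (Fin 1) (Fin 1) A)
    (w : Matrix (Fin 1) n A) : (M 0 0) • w = M * w := by
  ext i j
  obtain rfl : i = 0 := Subsingleton.elim _ _
  simp [Matrix.mul_apply]

end layer2


end WarfieldAux

set_option maxHeartbeats 4000000 in
/-- Warfield condition for `X = Aᴺ·p`.  Let `A` be a unital C⋆-algebra,
`p ∈ M_N(A)` a projection, `X = {x ∈ M_{1×N}(A) : x·p = x}`, `k ≥ 1`, and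
`x₁, …, x_{k+1} ∈ X`.  The following are equivalent: (a) there are `a₁, …, a_k ∈ A` such
that `∑ᵢ (xᵢ + aᵢ·x_{k+1})ᴴ (xᵢ + aᵢ·x_{k+1})` is invertible in the corner `p M_N(A) p`;
(b) there are `y₁, …, y_{k+1} ∈ X` with `∑ᵢ yᵢᴴ xᵢ = p` and `∑_{i≤k} yᵢᴴ yᵢ` invertible in
the corner `p M_N(A) p`. -/
theorem warfield_condition_rowSpace (A : Type*) [CStarAlgebra A]
    (N : ℕ) (hN : 1 ≤ N)
    (p : Matrix (Fin N) (Fin N) A) (hp : p * p = p) (hps : pᴴ = p)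
    (k : ℕ) (hk : 1 ≤ k)
    (x : Fin (k + 1) → Matrix (Fin 1) (Fin N) A) (hx : ∀ i, x i * p = x i) :
    (∃ a : Fin k → A,
        CornerIsUnit p (∑ i : Fin k, (x i.castSucc + a i • x (Fin.last k))ᴴ *
          (x i.castSucc + a i • x (Fin.last k)))) ↔
      ∃ y : Fin (k + 1) → Matrix (Fin 1) (Fin N) A, (∀ i, y i * p = y i) ∧
        (∑ i, (y i)ᴴ * x i) = p ∧
          CornerIsUnit p (∑ i : Fin k, (y i.castSucc)ᴴ * y i.castSucc) := by

  constructor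
  · rintro ⟨a, c, hc1, hc2, hc3⟩
    set B := ∑ i : Fin k, (x i.castSucc + a i • x (Fin.last k))ᴴ *
      (x i.castSucc + a i • x (Fin.last k)) with hB
    have hzp : ∀ i : Fin k, (x i.castSucc + a i • x (Fin.last k)) * p =
        x i.castSucc + a i • x (Fin.last k) := fun i => by
      rw [Matrix.add_mul, hx, Matrix.smul_mul, hx]
    have hpz : ∀ i : Fin k, p * (x i.castSucc + a i • x (Fin.last k))ᴴ =
        (x i.castSucc + a i • x (Fin.last k))ᴴ := fun i => by
      conv_lhs => rw [← hps, ← Matrix.conjTranspose_mul, hzp]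
    have hBp : B * p = B := by
      rw [hB, Matrix.sum_mul]
      exact Finset.sum_congr rfl fun i _ => by rw [Matrix.mul_assoc, hzp]
    have hpB : p * B = B := by
      rw [hB, Matrix.mul_sum]
      exact Finset.sum_congr rfl fun i _ => by rw [← Matrix.mul_assoc, hpz]
    have hBsa : Bᴴ = B := by
      rw [hB, Matrix.conjTranspose_sum]
      exact Finset.sum_congr rfl fun i _ => by
        rw [Matrix.conjTranspose_mul, conjTranspose_conjTranspose]
    have hcH : cᴴ = p * cᴴ * p := by
      conv_lhs => rw [hc1]
      rw [Matrix.conjTranspose_mul, Matrix.conjTranspose_mul, hps, Matrix.mul_assoc]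
    have hcHp : cᴴ * p = cᴴ := by
      conv_lhs => rw [hcH]
      rw [Matrix.mul_assoc, hp]
      exact hcH.symm
    have hpcH : p * cᴴ = cᴴ := by
      conv_lhs => rw [hcH]
      rw [← Matrix.mul_assoc, ← Matrix.mul_assoc, hp]
      exact hcH.symm
    refine ⟨(Fin.snoc (fun i => (x i.castSucc + a i • x (Fin.last k)) * cᴴ)
      (∑ i : Fin k, star (a i) • ((x i.castSucc + a i • x (Fin.last k)) * cᴴ)) :
        Fin (k+1) → Matrix (Fin 1) (Fin N) A), ?_, ?_, ?_⟩
    · intro i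
      refine Fin.lastCases ?_ (fun j => ?_) i
      · rw [Fin.snoc_last, Matrix.sum_mul]
        exact Finset.sum_congr rfl fun j _ => by
          rw [Matrix.smul_mul, Matrix.mul_assoc, hcHp]
      · rw [Fin.snoc_castSucc, Matrix.mul_assoc, hcHp]
    · rw [Fin.sum_univ_castSucc]
      simp only [Fin.snoc_castSucc, Fin.snoc_last]
      rw [Matrix.conjTranspose_sum, Matrix.sum_mul, ← Finset.sum_add_distrib]
      have : ∀ i : Fin k,
          ((x i.castSucc + a i • x (Fin.last k)) * cᴴ)ᴴ * x i.castSucc +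
            (star (a i) • ((x i.castSucc + a i • x (Fin.last k)) * cᴴ))ᴴ * x (Fin.last k) =
          c * ((x i.castSucc + a i • x (Fin.last k))ᴴ *
            (x i.castSucc + a i • x (Fin.last k))) := by
        intro i
        rw [← row_conj_smul, ← Matrix.mul_add, Matrix.conjTranspose_mul,
          conjTranspose_conjTranspose, Matrix.mul_assoc]
      rw [Finset.sum_congr rfl fun i _ => this i, ← Matrix.mul_sum, ← hB, hc2]
    · simp only [Fin.snoc_castSucc]
      have hsum3 : (∑ i : Fin k,
          ((x i.castSucc + a i • x (Fin.last k)) * cᴴ)ᴴ *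
            ((x i.castSucc + a i • x (Fin.last k)) * cᴴ)) = cᴴ := by
        have : ∀ i : Fin k,
            ((x i.castSucc + a i • x (Fin.last k)) * cᴴ)ᴴ *
              ((x i.castSucc + a i • x (Fin.last k)) * cᴴ) =
            c * (((x i.castSucc + a i • x (Fin.last k))ᴴ *
              (x i.castSucc + a i • x (Fin.last k))) * cᴴ) := by
          intro i
          rw [Matrix.conjTranspose_mul, conjTranspose_conjTranspose, Matrix.mul_assoc,
            ← Matrix.mul_assoc ((x i.castSucc + a i • x (Fin.last k))ᴴ)]
        rw [Finset.sum_congr rfl fun i _ => this i, ← Matrix.mul_sum, ← Matrix.sum_mul, ← hB,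
          ← Matrix.mul_assoc, hc2, hpcH]
      rw [hsum3]
      refine ⟨B, ?_, ?_, ?_⟩
      · rw [hpB, hBp]
      · calc B * cᴴ = (c * Bᴴ)ᴴ := by rw [Matrix.conjTranspose_mul,
            conjTranspose_conjTranspose]
          _ = p := by rw [hBsa, hc2, hps]
      · calc cᴴ * B = (Bᴴ * c)ᴴ := by rw [Matrix.conjTranspose_mul,
            conjTranspose_conjTranspose]
          _ = p := by rw [hBsa, hc3, hps]
  · rintro ⟨y, hyp, hysum, e, he1, he2, he3⟩
    set D := ∑ i : Fin k, (y i.castSucc)ᴴ * y i.castSucc with hD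
    have hDsa : Dᴴ = D := by
      rw [hD, Matrix.conjTranspose_sum]
      exact Finset.sum_congr rfl fun i _ => by
        rw [Matrix.conjTranspose_mul, conjTranspose_conjTranspose]
    have hpyH : ∀ i : Fin (k+1), p * (y i)ᴴ = (y i)ᴴ := fun i => by
      conv_lhs => rw [← hps, ← Matrix.conjTranspose_mul, hyp i]
    set a : Fin k → A := fun i => (y i.castSucc * e * (y (Fin.last k))ᴴ) 0 0 with ha
    refine ⟨a, ?_⟩
    set z : Fin k → Matrix (Fin 1) (Fin N) A :=
      fun i => x i.castSucc + a i • x (Fin.last k) with hz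
    show CornerIsUnit p (∑ i : Fin k, (z i)ᴴ * z i)
    set B := ∑ i : Fin k, (z i)ᴴ * z i with hB
    have hzp : ∀ i : Fin k, z i * p = z i := fun i => by
      rw [hz]; rw [Matrix.add_mul, hx, Matrix.smul_mul, hx]
    have hpzH : ∀ i : Fin k, p * (z i)ᴴ = (z i)ᴴ := fun i => by
      conv_lhs => rw [← hps, ← Matrix.conjTranspose_mul, hzp]
    have hBp : B * p = B := by
      rw [hB, Matrix.sum_mul]
      exact Finset.sum_congr rfl fun i _ => by rw [Matrix.mul_assoc, hzp]
    have hpB : p * B = B := by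
      rw [hB, Matrix.mul_sum]
      exact Finset.sum_congr rfl fun i _ => by rw [← Matrix.mul_assoc, hpzH]
    set u : Fin k → Matrix (Fin N) (Fin N) A := fun i => (y i.castSucc)ᴴ * z i with hu
    have claim1 : ∑ i : Fin k, u i = p := by
      have expand : ∀ i : Fin k, u i =
          (y i.castSucc)ᴴ * x i.castSucc +
            ((y (Fin.last k) * (eᴴ * (y i.castSucc)ᴴ)) * y i.castSucc)ᴴ * x (Fin.last k) := by
        intro i
        rw [hu]
        simp only [hz]
        rw [Matrix.mul_add, row_conj_smul]
        congr 2
        rw [ha]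
        have hstar : star ((y i.castSucc * e * (y (Fin.last k))ᴴ) 0 0) =
            ((y (Fin.last k) * (eᴴ * (y i.castSucc)ᴴ))) 0 0 := by
          rw [← Matrix.conjTranspose_apply]
          congr 1
          rw [Matrix.conjTranspose_mul, Matrix.conjTranspose_mul,
            conjTranspose_conjTranspose]
        rw [hstar, entry_smul_row]
      rw [Finset.sum_congr rfl fun i _ => expand i, Finset.sum_add_distrib]
      have h2 : ∑ i : Fin k,
          ((y (Fin.last k) * (eᴴ * (y i.castSucc)ᴴ)) * y i.castSucc)ᴴ * x (Fin.last k) =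
          (y (Fin.last k))ᴴ * x (Fin.last k) := by
        rw [← Matrix.sum_mul]
        congr 1
        rw [← Matrix.conjTranspose_sum]
        have hin : ∑ i : Fin k, (y (Fin.last k) * (eᴴ * (y i.castSucc)ᴴ)) * y i.castSucc =
            y (Fin.last k) * (eᴴ * D) := by
          have : ∀ i : Fin k, (y (Fin.last k) * (eᴴ * (y i.castSucc)ᴴ)) * y i.castSucc =
              y (Fin.last k) * (eᴴ * ((y i.castSucc)ᴴ * y i.castSucc)) := by
            intro i
            rw [Matrix.mul_assoc, Matrix.mul_assoc]
          rw [Finset.sum_congr rfl fun i _ => this i, ← Matrix.mul_sum, ← Matrix.mul_sum, hD]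
        rw [hin, Matrix.conjTranspose_mul, Matrix.conjTranspose_mul,
          conjTranspose_conjTranspose, hDsa, he3, hpyH]
      rw [Fin.sum_univ_castSucc] at hysum
      rw [h2]
      exact hysum
    -- analytic certificate
    set t : Fin k → A := fun i => ∑ m : Fin N, y i.castSucc 0 m * star (y i.castSucc 0 m)
      with htdef
    have hrex : ∀ i : Fin k, ∃ ri : A, star ri * ri = algebraMap ℝ A ‖t i‖ - t i := fun i => by
      simpa [htdef] using
        exists_star_mul_self_eq_algebraMap_norm_sub (A := A) (fun m : Fin N => y i.castSucc 0 m)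
    choose r hr using hrex
    set lam : Fin k → ℝ := fun i => ‖t i‖ with hlamdef
    have hlamnn : ∀ i, 0 ≤ lam i := fun i => norm_nonneg _
    have gram : ∀ i : Fin k, (u i)ᴴ * u i = (z i)ᴴ * (t i • z i) := by
      intro i
      rw [hu]
      rw [Matrix.conjTranspose_mul, conjTranspose_conjTranspose, Matrix.mul_assoc,
        ← Matrix.mul_assoc (y i.castSucc), ← entry_smul_row]
      have : (y i.castSucc * (y i.castSucc)ᴴ) 0 0 = t i := by
        simp [htdef, Matrix.mul_apply, Matrix.conjTranspose_apply]
      rw [this]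
    have Fid : ∀ i : Fin k, lam i • ((z i)ᴴ * z i) =
        (u i)ᴴ * u i + ((r i) • z i)ᴴ * ((r i) • z i) := by
      intro i
      rw [gram i, row_smul_conj, hr i, ← Matrix.mul_add, ← add_smul]
      have hcanc : t i + (algebraMap ℝ A (lam i) - t i) = algebraMap ℝ A (lam i) := by abel
      rw [hcanc, Algebra.algebraMap_eq_smul_one, smul_one_smul, _root_.Matrix.mul_smul]
    have E1 : ∑ i : Fin k, lam i • ((z i)ᴴ * z i) =
        (∑ i : Fin k, (u i)ᴴ * u i) + ∑ i : Fin k, ((r i) • z i)ᴴ * ((r i) • z i) := by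
      rw [Finset.sum_congr rfl fun i _ => Fid i, Finset.sum_add_distrib]
    set S := ∑ i : Fin k, (u i)ᴴ * u i with hSdef
    set R := ∑ i : Fin k, ((r i) • z i)ᴴ * ((r i) • z i) with hRdef
    set k' : ℝ := (k : ℝ) with hk'def
    have hk'pos : 0 < k' := by
      rw [hk'def]; exact_mod_cast Nat.lt_of_lt_of_le Nat.zero_lt_one hk
    have E2 : ∑ i : Fin k, ∑ j : Fin k, (u i - u j)ᴴ * (u i - u j)
        = (2 * k') • S - (2:ℝ) • p := by
      have expand : ∀ i j : Fin k, (u i - u j)ᴴ * (u i - u j) =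
          (u i)ᴴ * u i - (u i)ᴴ * u j - (u j)ᴴ * u i + (u j)ᴴ * u j := by
        intro i j
        simp only [Matrix.conjTranspose_sub, Matrix.sub_mul, Matrix.mul_sub]
        abel
      rw [Finset.sum_congr rfl fun i (_ : i ∈ Finset.univ) =>
        Finset.sum_congr rfl fun j (_ : j ∈ Finset.univ) => expand i j]
      simp only [Finset.sum_add_distrib, Finset.sum_sub_distrib]
      have h1 : (∑ _i : Fin k, S) = k • S := by
        simp [Finset.sum_const]
      have h2 : ∑ i : Fin k, ∑ _j : Fin k, (u i)ᴴ * u i = k • S := by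
        simp only [Finset.sum_const, Finset.card_univ, Fintype.card_fin]
        rw [← Finset.smul_sum]
      have h3 : ∑ i : Fin k, ∑ j : Fin k, (u i)ᴴ * u j = p := by
        have hin : ∀ i : Fin k, ∑ j : Fin k, (u i)ᴴ * u j = (u i)ᴴ * p := fun i => by
          rw [← Matrix.mul_sum, claim1]
        rw [Finset.sum_congr rfl fun i _ => hin i, ← Matrix.sum_mul,
          ← Matrix.conjTranspose_sum, claim1, hps, hp]
      have h4 : ∑ i : Fin k, ∑ j : Fin k, (u j)ᴴ * u i = p := by
        have hin : ∀ i : Fin k, ∑ j : Fin k, (u j)ᴴ * u i = p * u i := fun i => by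
          rw [← Matrix.sum_mul, ← Matrix.conjTranspose_sum, claim1, hps]
        rw [Finset.sum_congr rfl fun i _ => hin i, ← Matrix.mul_sum, claim1, hp]
      rw [h2, h3, h4, h1, ← Nat.cast_smul_eq_nsmul ℝ k S, ← hk'def]
      module
    -- constants
    set Λ : ℝ := (∑ i, lam i) + 1 with hΛdef
    have hΛpos : 0 < Λ := by
      have : 0 ≤ ∑ i, lam i := Finset.sum_nonneg fun i _ => hlamnn i
      rw [hΛdef]; linarith
    have hΛlam : ∀ i : Fin k, 0 ≤ Λ - lam i := by
      intro i
      have : lam i ≤ ∑ j, lam j :=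
        Finset.single_le_sum (fun j _ => hlamnn j) (Finset.mem_univ i)
      rw [hΛdef]; linarith
    set K : ℝ := k' * Λ with hKdef
    have hKpos : 0 < K := mul_pos hk'pos hΛpos
    set μ : ℝ := (1 + K)⁻¹ with hμdef
    have hμpos : 0 < μ := by rw [hμdef]; exact inv_pos.mpr (by linarith)
    have hμK : μ ≤ K⁻¹ := by
      rw [hμdef]
      exact inv_anti₀ hKpos (by linarith)
    have hμ1 : μ ≤ 1 := by
      rw [hμdef]
      exact inv_le_one_of_one_le₀ (by linarith)
    have hc2nn : 0 ≤ K⁻¹ * k' := mul_nonneg (inv_nonneg.mpr hKpos.le) hk'pos.le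
    have hc3nn : 0 ≤ K⁻¹ * 2⁻¹ := mul_nonneg (inv_nonneg.mpr hKpos.le) (by norm_num)
    -- certificate family
    set w : (Fin k ⊕ Fin k) ⊕ ((Fin k × Fin k × Fin N) ⊕ (Fin N ⊕ Fin N)) →
        Matrix (Fin 1) (Fin N) A :=
      Sum.elim
        (Sum.elim (fun i => Real.sqrt ((K⁻¹ * k') * (Λ - lam i)) • z i)
          (fun i => Real.sqrt (K⁻¹ * k') • (r i • z i)))
        (Sum.elim
          (fun ijm => Real.sqrt (K⁻¹ * 2⁻¹) •
            Matrix.of fun (_ : Fin 1) j' => (u ijm.1 - u ijm.2.1) ijm.2.2 j')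
          (Sum.elim
            (fun m => Real.sqrt (K⁻¹ - μ) • Matrix.of fun (_ : Fin 1) j' => p m j')
            (fun m => Real.sqrt (1 - μ) • Matrix.of fun (_ : Fin 1) j' => (1 - p) m j')))
      with hwdef
    have hcert : ∑ j : (Fin k ⊕ Fin k) ⊕ ((Fin k × Fin k × Fin N) ⊕ (Fin N ⊕ Fin N)),
        (w j)ᴴ * w j =
        ((∑ i : Fin k, ((K⁻¹ * k') * (Λ - lam i)) • ((z i)ᴴ * z i)) + (K⁻¹ * k') • R) +
          ((K⁻¹ * 2⁻¹) • (∑ i : Fin k, ∑ j : Fin k, (u i - u j)ᴴ * (u i - u j)) +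
            ((K⁻¹ - μ) • p + (1 - μ) • (1 - p))) := by
      have g1 : ∑ i : Fin k,
          (Real.sqrt ((K⁻¹ * k') * (Λ - lam i)) • z i)ᴴ *
            (Real.sqrt ((K⁻¹ * k') * (Λ - lam i)) • z i) =
          ∑ i : Fin k, ((K⁻¹ * k') * (Λ - lam i)) • ((z i)ᴴ * z i) :=
        Finset.sum_congr rfl fun i _ => sqrt_smul_cert _ (mul_nonneg hc2nn (hΛlam i)) _
      have g2 : ∑ i : Fin k,
          (Real.sqrt (K⁻¹ * k') • (r i • z i))ᴴ * (Real.sqrt (K⁻¹ * k') • (r i • z i)) =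
          (K⁻¹ * k') • R := by
        rw [Finset.sum_congr rfl fun i (_ : i ∈ Finset.univ) =>
          sqrt_smul_cert (K⁻¹ * k') hc2nn ((r i) • z i), ← Finset.smul_sum]
      have g3 : ∑ ijm : Fin k × Fin k × Fin N,
          (Real.sqrt (K⁻¹ * 2⁻¹) •
            Matrix.of fun (_ : Fin 1) j' => (u ijm.1 - u ijm.2.1) ijm.2.2 j')ᴴ *
          (Real.sqrt (K⁻¹ * 2⁻¹) •
            Matrix.of fun (_ : Fin 1) j' => (u ijm.1 - u ijm.2.1) ijm.2.2 j') =
          (K⁻¹ * 2⁻¹) • (∑ i : Fin k, ∑ j : Fin k, (u i - u j)ᴴ * (u i - u j)) := by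
        rw [Fintype.sum_prod_type]
        have hin : ∀ i : Fin k, ∑ jm : Fin k × Fin N,
            (Real.sqrt (K⁻¹ * 2⁻¹) •
              Matrix.of fun (_ : Fin 1) j' => (u i - u jm.1) jm.2 j')ᴴ *
            (Real.sqrt (K⁻¹ * 2⁻¹) •
              Matrix.of fun (_ : Fin 1) j' => (u i - u jm.1) jm.2 j') =
            (K⁻¹ * 2⁻¹) • ∑ j : Fin k, (u i - u j)ᴴ * (u i - u j) := by
          intro i
          rw [Fintype.sum_prod_type]
          rw [Finset.sum_congr rfl fun j (_ : j ∈ Finset.univ) =>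
            Finset.sum_congr rfl fun m (_ : m ∈ Finset.univ) =>
              sqrt_smul_cert (K⁻¹ * 2⁻¹) hc3nn
                (Matrix.of fun (_ : Fin 1) j' => (u i - u j) m j')]
          rw [Finset.sum_congr rfl fun j (_ : j ∈ Finset.univ) =>
            (Finset.smul_sum (r := K⁻¹ * 2⁻¹)).symm, ← Finset.smul_sum]
          congr 1
          exact Finset.sum_congr rfl fun j _ => (rows_decomp (u i - u j)).symm
        rw [Finset.sum_congr rfl fun i _ => hin i, ← Finset.smul_sum]
      have g4 : ∑ m : Fin N,
          (Real.sqrt (K⁻¹ - μ) • Matrix.of fun (_ : Fin 1) j' => p m j')ᴴ *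
            (Real.sqrt (K⁻¹ - μ) • Matrix.of fun (_ : Fin 1) j' => p m j') =
          (K⁻¹ - μ) • p := by
        rw [Finset.sum_congr rfl fun m (_ : m ∈ Finset.univ) =>
          sqrt_smul_cert (K⁻¹ - μ) (by linarith : (0:ℝ) ≤ K⁻¹ - μ)
            (Matrix.of fun (_ : Fin 1) j' => p m j'),
          ← Finset.smul_sum, ← rows_decomp, hps, hp]
      have g5 : ∑ m : Fin N,
          (Real.sqrt (1 - μ) • Matrix.of fun (_ : Fin 1) j' => (1 - p) m j')ᴴ *
            (Real.sqrt (1 - μ) • Matrix.of fun (_ : Fin 1) j' => (1 - p) m j') =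
          (1 - μ) • (1 - p) := by
        rw [Finset.sum_congr rfl fun m (_ : m ∈ Finset.univ) =>
          sqrt_smul_cert (1 - μ) (by linarith : (0:ℝ) ≤ 1 - μ)
            (Matrix.of fun (_ : Fin 1) j' => (1 - p) m j'),
          ← Finset.smul_sum, ← rows_decomp]
        congr 1
        have h1p : ((1 : Matrix (Fin N) (Fin N) A) - p)ᴴ = 1 - p := by
          rw [Matrix.conjTranspose_sub, Matrix.conjTranspose_one, hps]
        rw [h1p]
        simp [Matrix.mul_sub, Matrix.sub_mul, hp]
      simp only [hwdef]
      rw [Fintype.sum_sum_type, Fintype.sum_sum_type, Fintype.sum_sum_type,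
        Fintype.sum_sum_type]
      simp only [Sum.elim_inl, Sum.elim_inr]
      rw [g1, g2, g3, g4, g5]
    have hone : (K⁻¹ * k') * Λ = 1 := by
      rw [mul_assoc, ← hKdef, inv_mul_cancel₀ hKpos.ne']
    have hT1 : ∑ i : Fin k, ((K⁻¹ * k') * (Λ - lam i)) • ((z i)ᴴ * z i) =
        B - (K⁻¹ * k') • S - (K⁻¹ * k') • R := by
      have per : ∀ i : Fin k, ((K⁻¹ * k') * (Λ - lam i)) • ((z i)ᴴ * z i) =
          ((K⁻¹ * k') * Λ) • ((z i)ᴴ * z i) - (K⁻¹ * k') • (lam i • ((z i)ᴴ * z i)) := by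
        intro i
        rw [mul_sub, sub_smul]
        congr 1
        exact mul_smul _ _ _
      rw [Finset.sum_congr rfl fun i _ => per i, Finset.sum_sub_distrib,
        ← Finset.smul_sum, ← Finset.smul_sum, hone, one_smul, E1, smul_add, ← hB]
      abel
    have hT3 : (K⁻¹ * 2⁻¹) • (∑ i : Fin k, ∑ j : Fin k, (u i - u j)ᴴ * (u i - u j)) =
        (K⁻¹ * k') • S - K⁻¹ • p := by
      rw [E2, smul_sub, smul_smul, smul_smul]
      have e1 : K⁻¹ * 2⁻¹ * (2 * k') = K⁻¹ * k' := by ring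
      have e2 : K⁻¹ * 2⁻¹ * 2 = K⁻¹ := by ring
      rw [e1, e2]
    have heq : B + (1 - p) = μ • (1 : Matrix (Fin N) (Fin N) A) +
        ∑ j : (Fin k ⊕ Fin k) ⊕ ((Fin k × Fin k × Fin N) ⊕ (Fin N ⊕ Fin N)),
          (w j)ᴴ * w j := by
      rw [hcert, hT1, hT3]
      module
    refine cornerIsUnit_of_isUnit hp hpB hBp ?_
    rw [heq]
    exact isUnit_smul_one_add_sum hμpos w
      (fun w' => isUnit_one_add_sum_conjTranspose_mul_self N w')
end

section
/- Let A be a unital C*-algebra, N ≥ 1, p ∈ M_N(A) a projection, and X = A^N·p viewed as a left A-module. Then Bsr(X) ≤ tsr(X): if k ≥ 1 is such that Gen_k(X) is dense in X^k, then every (k+1)-tuple in Gen_{k+1}(X) is reducible. -/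
open Matrix
open scoped ENNReal NNReal

/-- A `k`-tuple of rows in `X = Aᴺ·p` generates `X` as a left `A`-module:
`A·x₁ + ⋯ + A·x_k = X`. -/
def GenTuple {A : Type*} [Ring A] {N : ℕ} (p : Matrix (Fin N) (Fin N) A) {k : ℕ}
    (x : Fin k → Matrix (Fin 1) (Fin N) A) : Prop :=
  ∀ v : Matrix (Fin 1) (Fin N) A, v * p = v → ∃ a : Fin k → A, ∑ i, a i • x i = v

/-- From a generating tuple we can extract a matrix of coefficients `C` with `p·C = C`
expressing each row of `p` as a combination of the `x i`. -/
lemma genCoeff {A : Type*} [Ring A] {N k : ℕ} {p : Matrix (Fin N) (Fin N) A}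
    (hp : p * p = p) {x : Fin k → Matrix (Fin 1) (Fin N) A} (h : GenTuple p x) :
    ∃ C : Matrix (Fin N) (Fin k) A, p * C = C ∧
      ∀ j b, ∑ i, C j i * x i 0 b = p j b := by
  have hpe : ∀ j b, ∑ c, p j c * p c b = p j b := by
    intro j b
    conv_rhs => rw [← hp]
    rw [Matrix.mul_apply]
  have hrow : ∀ j : Fin N, (Matrix.of fun (_ : Fin 1) b => p j b) * p
      = Matrix.of fun (_ : Fin 1) b => p j b := by
    intro j; ext u b
    simp only [Matrix.mul_apply, Matrix.of_apply]
    exact hpe j b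
  choose a ha using fun j => h _ (hrow j)
  have ha' : ∀ c b, ∑ i, a c i * x i 0 b = p c b := by
    intro c b
    have := congrFun (congrFun (ha c) 0) b
    simpa [Matrix.sum_apply, Matrix.smul_apply, smul_eq_mul] using this
  refine ⟨p * Matrix.of (fun j i => a j i), by rw [← Matrix.mul_assoc, hp], ?_⟩
  intro j b
  calc ∑ i, (p * Matrix.of (fun j i => a j i)) j i * x i 0 b
      = ∑ i, ∑ c, p j c * a c i * x i 0 b := by
        simp [Matrix.mul_apply, Finset.sum_mul]
    _ = ∑ c, p j c * ∑ i, a c i * x i 0 b := by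
        rw [Finset.sum_comm]
        simp [Finset.mul_sum, mul_assoc]
    _ = ∑ c, p j c * p c b := by
        refine Finset.sum_congr rfl fun c _ => ?_
        rw [ha']
    _ = p j b := hpe j b

/-- Invertibility of `1 + e` for entrywise-small `e`, via the `L∞`-operator norm. -/
lemma exists_inv_one_add {A : Type*} [NormedRing A] [CompleteSpace A] {N : ℕ}
    (e : Matrix (Fin N) (Fin N) A) (h : ∑ j, ∑ b, ‖e j b‖ < 1) :
    ∃ w : Matrix (Fin N) (Fin N) A, w * (1 + e) = 1 ∧ (1 + e) * w = 1 := by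
  haveI : Fact ((1:ℝ≥0∞) ≤ 1) := ⟨le_refl _⟩
  letI := Matrix.linftyOpNormedRing (n := Fin N) (α := A)
  letI : CompleteSpace (Matrix (Fin N) (Fin N) A) :=
    inferInstanceAs (CompleteSpace (Fin N → Fin N → A))
  haveI : @CompleteSpace (Matrix (Fin N) (Fin N) A) PseudoMetricSpace.toUniformSpace := this
  have hne : ‖(-e)‖ < 1 := by
    rw [Matrix.linfty_opNorm_def]
    refine lt_of_le_of_lt ?_ h
    have h2 : (Finset.univ.sup fun i : Fin N => ∑ j, ‖(-e) i j‖₊) ≤ ∑ i, ∑ j, ‖e i j‖₊ := by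
      refine Finset.sup_le fun i _ => ?_
      simp only [Matrix.neg_apply, nnnorm_neg]
      exact Finset.single_le_sum (f := fun i => ∑ j, ‖e i j‖₊) (fun _ _ => zero_le)
        (Finset.mem_univ i)
    calc ((Finset.univ.sup fun i : Fin N => ∑ j, ‖(-e) i j‖₊ : ℝ≥0) : ℝ)
        ≤ ((∑ i, ∑ j, ‖e i j‖₊ : ℝ≥0) : ℝ) := by exact_mod_cast h2
      _ = ∑ j, ∑ b, ‖e j b‖ := by push_cast; rfl
  obtain ⟨u, hu⟩ := isUnit_one_sub_of_norm_lt_one hne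
  have hval : u.val = 1 + e := by rw [hu, sub_neg_eq_add]
  exact ⟨(u⁻¹).val, by rw [← hval]; exact u.inv_mul, by rw [← hval]; exact u.mul_inv⟩

set_option maxHeartbeats 1000000 in
/-- `Bsr(X) ≤ tsr(X)`.  Let `A` be a unital C⋆-algebra, `p ∈ M_N(A)` a
projection, and `X = Aᴺ·p` viewed as a left `A`-module.  If `k ≥ 1` is such that `Gen_k(X)`
is dense in `Xᵏ`, then every `(k+1)`-tuple in `Gen_{k+1}(X)` is reducible. -/
theorem bsr_le_tsr_rowSpace (A : Type*) [CStarAlgebra A]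
    (N : ℕ) (hN : 1 ≤ N)
    (p : Matrix (Fin N) (Fin N) A) (hp : p * p = p) (hps : pᴴ = p)
    (k : ℕ) (hk : 1 ≤ k)
    (hdense : Dense {x : Fin k → {v : Matrix (Fin 1) (Fin N) A // v * p = v} |
      GenTuple p fun i => (x i : Matrix (Fin 1) (Fin N) A)})
    (x : Fin (k + 1) → Matrix (Fin 1) (Fin N) A) (hx : ∀ i, x i * p = x i)
    (hgen : GenTuple p x) :
    ∃ a : Fin k → A, GenTuple p fun i => x i.castSucc + a i • x (Fin.last k) := by
  classical
  have hpstar : ∀ a b, star (p a b) = p b a := by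
    intro a b
    have := congrFun (congrFun hps b) a
    simpa [Matrix.conjTranspose_apply] using this
  obtain ⟨C, hpC, hC⟩ := genCoeff hp hgen
  set y : Matrix (Fin 1) (Fin N) A := x (Fin.last k) with hy
  set M : Matrix (Fin k) (Fin N) A := Matrix.of fun i b => x i.castSucc 0 b with hM
  set D : Matrix (Fin N) (Fin k) A := Matrix.of fun j i => C j i.castSucc with hD
  set zc : Matrix (Fin N) (Fin 1) A := Matrix.of fun j _ => C j (Fin.last k) with hzc
  -- the basic identity D*M + zc*y = p
  have hDM : D * M + zc * y = p := by
    ext j b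
    have := hC j b
    rw [Fin.sum_univ_castSucc] at this
    simp only [Matrix.add_apply, Matrix.mul_apply, Matrix.of_apply, hD, hM, hzc,
      Fin.sum_univ_one]
    exact this
  have hpD : p * D = D := by
    ext j i
    have := congrFun (congrFun hpC j) i.castSucc
    simpa [Matrix.mul_apply, hD] using this
  have hpzc : p * zc = zc := by
    ext j u
    have := congrFun (congrFun hpC j) (Fin.last k)
    simpa [Matrix.mul_apply, hzc] using this
  have hMp : M * p = M := by
    ext i b
    have := congrFun (congrFun (hx i.castSucc) 0) b
    simpa [Matrix.mul_apply, hM] using this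
  -- bounds
  set B : ℝ := (∑ i, ∑ b, ‖M i b‖) + 1 with hB
  have hB0 : 0 < B := by
    have : (0:ℝ) ≤ ∑ i, ∑ b, ‖M i b‖ :=
      Finset.sum_nonneg fun _ _ => Finset.sum_nonneg fun _ _ => norm_nonneg _
    simp only [hB]; linarith
  have hMB : ∀ i b, ‖M i b‖ ≤ B := by
    intro i b
    have h1 : ‖M i b‖ ≤ ∑ b, ‖M i b‖ :=
      Finset.single_le_sum (fun _ _ => norm_nonneg _) (Finset.mem_univ b)
    have h2 : ∑ b, ‖M i b‖ ≤ ∑ i, ∑ b, ‖M i b‖ :=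
      Finset.single_le_sum (f := fun i => ∑ b, ‖M i b‖)
        (fun _ _ => Finset.sum_nonneg fun _ _ => norm_nonneg _) (Finset.mem_univ i)
    simp only [hB]; linarith
  set Q : ℝ := (N : ℝ) * N * k * B with hQ
  have hQ0 : 0 ≤ Q := by positivity
  set ε : ℝ := 1 / (Q + 1) with hε
  have hε0 : 0 < ε := by positivity
  -- the target point of the density argument
  have hTmem : ∀ i : Fin k, (Matrix.of fun (_ : Fin 1) j => star (D j i)) * p
      = Matrix.of fun (_ : Fin 1) j => star (D j i) := by
    intro i
    ext u b
    calc ((Matrix.of fun (_ : Fin 1) j => star (D j i)) * p) u b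
        = ∑ c, star (D c i) * p c b := by simp [Matrix.mul_apply]
      _ = ∑ c, star (star (p c b) * D c i) := by simp [StarMul.star_mul]
      _ = star (∑ c, p b c * D c i) := by rw [← star_sum]; simp [hpstar]
      _ = star (D b i) := by
          have := congrFun (congrFun hpD b) i
          rw [Matrix.mul_apply] at this
          rw [this]
      _ = (Matrix.of fun (_ : Fin 1) j => star (D j i)) u b := by simp
  set T : Fin k → {v : Matrix (Fin 1) (Fin N) A // v * p = v} :=
    fun i => ⟨Matrix.of fun _ j => star (D j i), hTmem i⟩ with hT
  set U : Set (Fin k → {v : Matrix (Fin 1) (Fin N) A // v * p = v}) :=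
    {s | ∀ i j, ‖(s i).1 0 j - (T i).1 0 j‖ < ε} with hU
  have hUopen : IsOpen U := by
    have hUeq : U = ⋂ (i : Fin k), ⋂ (j : Fin N),
        (fun s : Fin k → {v : Matrix (Fin 1) (Fin N) A // v * p = v} => (s i).1 0 j) ⁻¹'
          (Metric.ball ((T i).1 0 j) ε) := by
      ext s
      simp [hU, Set.mem_iInter, Metric.mem_ball, dist_eq_norm]
    rw [hUeq]
    refine isOpen_iInter_of_finite fun i => isOpen_iInter_of_finite fun j => ?_
    have hc : Continuous
        (fun s : Fin k → {v : Matrix (Fin 1) (Fin N) A // v * p = v} => (s i).1 0 j) :=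
      ((continuous_apply i).subtype_val).matrix_elem 0 j
    exact Metric.isOpen_ball.preimage hc
  have hTU : T ∈ U := by
    intro i j
    simpa using hε0
  obtain ⟨s, hsGen, hsU⟩ := hdense.exists_mem_open hUopen ⟨T, hTU⟩
  -- the perturbed coefficient matrix
  set D' : Matrix (Fin N) (Fin k) A := Matrix.of fun j i => star ((s i).1 0 j) with hD'
  have hpD' : p * D' = D' := by
    ext j i
    calc (p * D') j i = ∑ c, p j c * star ((s i).1 0 c) := by simp [Matrix.mul_apply, hD']
      _ = ∑ c, star ((s i).1 0 c * star (p j c)) := by simp [StarMul.star_mul]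
      _ = star (∑ c, (s i).1 0 c * p c j) := by rw [← star_sum]; simp [hpstar]
      _ = star ((s i).1 0 j) := by
          have := congrFun (congrFun (s i).2 0) j
          rw [Matrix.mul_apply] at this
          rw [this]
      _ = D' j i := by simp [hD']
  obtain ⟨E0, hpE0, hE0⟩ := genCoeff hp hsGen
  set E : Matrix (Fin k) (Fin N) A := Matrix.of fun i b => star (E0 b i) with hE
  have hD'E : D' * E = p := by
    ext j b
    calc (D' * E) j b = ∑ i, star ((s i).1 0 j) * star (E0 b i) := by
          simp [Matrix.mul_apply, hD', hE]
      _ = ∑ i, star (E0 b i * (s i).1 0 j) := by simp [StarMul.star_mul]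
      _ = star (∑ i, E0 b i * (s i).1 0 j) := by rw [← star_sum]
      _ = star (p b j) := by rw [hE0 b j]
      _ = p j b := hpstar _ _
  -- closeness of D' to D
  have hclose : ∀ j i, ‖D' j i - D j i‖ ≤ ε := by
    intro j i
    have h1 : D' j i - D j i = star ((s i).1 0 j - (T i).1 0 j) := by
      simp [hD', hD, hT, star_sub]
    rw [h1, norm_star]
    exact (hsU i j).le
  -- the error term
  set e : Matrix (Fin N) (Fin N) A := (D' - D) * M with he
  have hesmall : ∑ j, ∑ b, ‖e j b‖ < 1 := by
    have hentry : ∀ j b, ‖e j b‖ ≤ ∑ _i : Fin k, ε * B := by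
      intro j b
      rw [he, Matrix.mul_apply]
      refine le_trans (norm_sum_le _ _) (Finset.sum_le_sum fun i _ => ?_)
      calc ‖(D' - D) j i * M i b‖ ≤ ‖(D' - D) j i‖ * ‖M i b‖ := norm_mul_le _ _
        _ ≤ ε * B := by
            refine mul_le_mul ?_ (hMB i b) (norm_nonneg _) hε0.le
            simpa [Matrix.sub_apply] using hclose j i
    calc ∑ j, ∑ b, ‖e j b‖ ≤ ∑ _j : Fin N, ∑ _b : Fin N, ∑ _i : Fin k, ε * B := by
          refine Finset.sum_le_sum fun j _ => Finset.sum_le_sum fun b _ => hentry j b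
      _ = Q * ε := by
          simp only [Finset.sum_const, Finset.card_univ, Fintype.card_fin, nsmul_eq_mul,
            hQ]
          ring
      _ < 1 := by
          rw [hε, mul_one_div]
          exact (div_lt_one (by linarith)).mpr (lt_add_one Q)
  obtain ⟨w, hw1, hw2⟩ := exists_inv_one_add e hesmall
  -- commutation of w with p
  have hpe : p * e = e := by
    rw [he, ← Matrix.mul_assoc, Matrix.mul_sub, hpD', hpD]
  have hep : e * p = e := by
    rw [he, Matrix.mul_assoc, hMp]
  have h1pe : p * (1 + e) = (1 + e) * p := by
    rw [mul_add, add_mul, mul_one, one_mul, hpe, hep]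
  have hwp : w * p = p * w := by
    calc w * p = w * p * ((1 + e) * w) := by rw [hw2, mul_one]
      _ = w * (p * (1 + e)) * w := by simp only [mul_assoc]
      _ = w * ((1 + e) * p) * w := by rw [h1pe]
      _ = w * (1 + e) * (p * w) := by simp only [mul_assoc]
      _ = p * w := by rw [hw1, one_mul]
  -- the key invertibility computation
  have hkey : p * w * (p + e) = p := by
    have hpe' : p + e = p * (1 + e) := by rw [mul_add, mul_one, hpe]
    calc p * w * (p + e) = p * (w * p) * (1 + e) := by rw [hpe']; simp only [mul_assoc]
      _ = p * (p * w) * (1 + e) := by rw [hwp]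
      _ = p * p * (w * (1 + e)) := by simp only [mul_assoc]
      _ = p := by rw [hw1, hp, mul_one]
  -- assembling the new generating tuple
  set Rc : Matrix (Fin k) (Fin 1) A := E * zc with hRc
  have hD'Rc : D' * Rc = zc := by rw [hRc, ← Matrix.mul_assoc, hD'E, hpzc]
  set F : Matrix (Fin N) (Fin k) A := p * w * D' with hF
  have hsplit : D' * M + zc * y = p + e := by
    rw [he, Matrix.sub_mul, ← hDM]
    abel
  have hFG : F * (M + Rc * y) = p := by
    calc F * (M + Rc * y)
        = p * w * (D' * M + D' * (Rc * y)) := by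
          rw [hF]
          simp only [Matrix.mul_add, Matrix.mul_assoc]
      _ = p * w * (D' * M + zc * y) := by rw [← Matrix.mul_assoc D' Rc y, hD'Rc]
      _ = p * w * (p + e) := by rw [hsplit]
      _ = p := hkey
  have hFGe : ∀ j b, ∑ i, F j i * (M i b + Rc i 0 * y 0 b) = p j b := by
    intro j b
    simpa [Matrix.mul_apply, Matrix.add_apply, Fin.sum_univ_one]
      using congrFun (congrFun hFG j) b
  refine ⟨fun i => Rc i 0, ?_⟩
  intro v hv
  refine ⟨fun i => ∑ j, v 0 j * F j i, ?_⟩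
  ext u b
  have hu : u = 0 := Subsingleton.elim u 0
  subst hu
  have hvp : ∑ j, v 0 j * p j b = v 0 b := by
    have := congrFun (congrFun hv 0) b
    rw [Matrix.mul_apply] at this
    exact this
  calc (∑ i, (∑ j, v 0 j * F j i) • (x i.castSucc + Rc i 0 • y)) 0 b
      = ∑ i, (∑ j, v 0 j * F j i) * (M i b + Rc i 0 * y 0 b) := by
        simp [Matrix.sum_apply, Matrix.add_apply, Matrix.smul_apply, smul_eq_mul, hM, mul_add]
    _ = ∑ j, v 0 j * ∑ i, F j i * (M i b + Rc i 0 * y 0 b) := by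
        simp only [Finset.sum_mul, Finset.mul_sum, mul_assoc]
        rw [Finset.sum_comm]
    _ = ∑ j, v 0 j * p j b := by
        refine Finset.sum_congr rfl fun j _ => ?_
        rw [hFGe]
    _ = v 0 b := hvp
end

section
/- Let A be a unital C*-algebra, viewed as a left module over itself. Then Bsr(A) = tsr(A): the least n ≥ 1 such that for every left-unimodular (n+1)-tuple (x_1,…,x_n,y) (i.e., A·x_1 + ⋯ + A·x_n + A·y = A) there exist a_1,…,a_n ∈ A with A·(x_1 + a_1 y) + ⋯ + A·(x_n + a_n y) = A, equals the least n ≥ 1 such that the set of left-unimodular n-tuples {(x_1,…,x_n) ∈ Aⁿ : A·x_1 + ⋯ + A·x_n = A} is dense in Aⁿ (both taken in ℕ ∪ {∞}). -/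
set_option maxHeartbeats 1000000
open Finset

lemma reduce_imp_dense {A : Type*} [CStarAlgebra A] {n : ℕ}
    (hr : ∀ (x : Fin n → A) (y : A),
      (∃ (b : Fin n → A) (c : A), ∑ i, b i * x i + c * y = 1) →
        ∃ a : Fin n → A, ∃ b : Fin n → A, ∑ i, b i * (x i + a i * y) = 1) :
    Dense {x : Fin n → A | ∃ b : Fin n → A, ∑ i, b i * x i = 1} := by
  letI := CStarAlgebra.spectralOrder A
  haveI := CStarAlgebra.spectralOrderedRing A
  rw [Metric.dense_iff]
  intro x ε hε
  set H : A := ∑ i, star (x i) * x i with hH_def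
  have hH : (0:A) ≤ H := Finset.sum_nonneg fun i _ => star_mul_self_nonneg _
  have hHsa : IsSelfAdjoint H := .of_nonneg hH
  have hspec : ∀ t ∈ spectrum ℝ H, 0 ≤ t := fun t ht => spectrum_nonneg_of_nonneg hH ht
  set δ₂ : ℝ := (ε/3)^2 with hδ₂_def
  set δ : ℝ := δ₂ / 2 with hδ_def
  have hδ₂ : 0 < δ₂ := by positivity
  have hδ : 0 < δ := by positivity
  have hδlt : δ < δ₂ := by rw [hδ_def]; linarith
  set e : ℝ → ℝ := fun t => max (1 - t/δ) 0 with he_def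
  have he_cont : Continuous e := by fun_prop
  set y : A := cfc e H with hy_def
  set g : ℝ → ℝ := fun t => t + e t * e t with hg_def
  have hg_cont : Continuous g := by fun_prop
  have hG_eq : cfc g H = H + y * y := by
    rw [hg_def]
    rw [show (fun t : ℝ => t + e t * e t) = (fun t : ℝ => (fun s : ℝ => s) t + (fun s => e s * e s) t) from rfl]
    rw [cfc_add H (fun s : ℝ => s) (fun s => e s * e s) continuous_id.continuousOn
      ((he_cont.mul he_cont).continuousOn),
      cfc_id' ℝ H hHsa, cfc_mul e e H he_cont.continuousOn he_cont.continuousOn, hy_def]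
  have hGunit : IsUnit (cfc g H) := by
    rw [isUnit_cfc_iff g H hg_cont.continuousOn hHsa]
    intro t ht
    have ht0 := hspec t ht
    rcases eq_or_lt_of_le ht0 with h | h
    · have het : e t = 1 := by
        rw [he_def]; simp only [← h]
        norm_num
      have hgt : g t = t + e t * e t := rfl
      rw [hgt, het, ← h]; norm_num
    · have h2 : 0 ≤ e t * e t := mul_self_nonneg _
      have : 0 < g t := by rw [hg_def]; dsimp only; linarith
      exact this.ne'
  set Gu : Aˣ := hGunit.unit with hGu_def
  have hGu_val : (Gu : A) = cfc g H := rfl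
  -- unimodularity of (x, y)
  have hmod : ∃ (b : Fin n → A) (c : A), ∑ i, b i * x i + c * y = 1 := by
    refine ⟨fun i => (↑Gu⁻¹ : A) * star (x i), (↑Gu⁻¹ : A) * y, ?_⟩
    have : ∑ i, (↑Gu⁻¹ : A) * star (x i) * x i = (↑Gu⁻¹ : A) * H := by
      rw [hH_def, Finset.mul_sum]
      exact Finset.sum_congr rfl fun i _ => (mul_assoc _ _ _)
    rw [this, mul_assoc]
    rw [← mul_add, ← hG_eq, ← hGu_val]
    exact Gu.inv_mul
  obtain ⟨a, b', hb'⟩ := hr x y hmod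
  -- bound on the correction coefficients
  set M : ℝ := 1 + ∑ i, ‖a i‖ with hM_def
  have hM0 : 0 < M := by
    have : (0:ℝ) ≤ ∑ i, ‖a i‖ := Finset.sum_nonneg fun i _ => norm_nonneg _
    rw [hM_def]; linarith
  have hMa : ∀ i, ‖a i‖ ≤ M := by
    intro i
    have h1 : ‖a i‖ ≤ ∑ j, ‖a j‖ :=
      Finset.single_le_sum (f := fun j => ‖a j‖) (fun j _ => norm_nonneg _) (Finset.mem_univ i)
    rw [hM_def]; linarith
  set δ' : ℝ := min (ε / (3 * M)) 1 with hδ'_def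
  have hδ'0 : 0 < δ' := by
    rw [hδ'_def]
    exact lt_min (by positivity) one_pos
  have hδ'1 : δ' ≤ 1 := min_le_right _ _
  have hδ'ε : M * δ' ≤ ε / 3 := by
    have : δ' ≤ ε / (3 * M) := min_le_left _ _
    calc M * δ' ≤ M * (ε / (3 * M)) := by nlinarith
      _ = ε / 3 := by field_simp
  set f : ℝ → ℝ := fun t => max δ' (min ((t - δ)/(δ₂ - δ)) 1) with hf_def
  have hf_cont : Continuous f := by fun_prop
  have hf_pos : ∀ t ∈ spectrum ℝ H, f t ≠ 0 := by
    intro t _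
    have : δ' ≤ f t := le_max_left _ _
    linarith
  have hf_le_one : ∀ t, f t ≤ 1 := by
    intro t
    rw [hf_def]
    exact max_le hδ'1 (min_le_right _ _)
  have hf_nonneg : ∀ t, 0 ≤ f t := fun t => le_trans hδ'0.le (le_max_left _ _)
  set u : A := cfc f H with hu_def
  have hFuIs : IsUnit u := (isUnit_cfc_iff f H hf_cont.continuousOn hHsa).mpr hf_pos
  set Fu : Aˣ := hFuIs.unit with hFu_def
  have hFu_val : (Fu : A) = u := rfl
  set z : Fin n → A := fun i => (x i + a i * y) * u with hz_def
  -- membership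
  have hz_mem : ∃ b : Fin n → A, ∑ i, b i * z i = 1 := by
    refine ⟨fun i => (↑Fu⁻¹ : A) * b' i, ?_⟩
    have step : ∀ i, ((↑Fu⁻¹ : A) * b' i) * z i
        = (↑Fu⁻¹ : A) * (b' i * (x i + a i * y) * u) := by
      intro i
      rw [hz_def]
      noncomm_ring
    rw [Finset.sum_congr rfl fun i _ => step i, ← Finset.mul_sum, ← Finset.sum_mul, hb',
      one_mul, ← hFu_val]
    exact Fu.inv_mul
  -- the estimates
  have key_dist : ∀ i, dist (z i) (x i) < ε := by
    intro i
    have hsplit : z i - x i = x i * (u - 1) + a i * (y * u) := by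
      rw [hz_def]
      noncomm_ring
    -- Bound A : ‖x i * (u - 1)‖ ≤ ε / 3
    set q : ℝ → ℝ := fun t => f t - 1 with hq_def
    have hq_cont : Continuous q := by fun_prop
    have hw_eq : u - 1 = cfc q H := by
      rw [hu_def, hq_def, cfc_sub f (fun _ => 1) H hf_cont.continuousOn continuousOn_const,
        cfc_const_one ℝ H hHsa]
    set w : A := cfc q H with hw_def
    have hwsa : IsSelfAdjoint w := cfc_predicate q H
    have hxxH : star (x i) * x i ≤ H := by
      rw [hH_def]
      exact Finset.single_le_sum (f := fun j => star (x j) * x j)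
        (fun j _ => star_mul_self_nonneg _) (Finset.mem_univ i)
    have hconj_le : star w * (star (x i) * x i) * w ≤ star w * H * w :=
      star_left_conjugate_le_conjugate hxxH w
    have hconj_nonneg : 0 ≤ star w * (star (x i) * x i) * w :=
      star_left_conjugate_nonneg (star_mul_self_nonneg _) w
    have hnorm_le : ‖star w * (star (x i) * x i) * w‖ ≤ ‖star w * H * w‖ :=
      CStarAlgebra.norm_le_norm_of_nonneg_of_le hconj_nonneg hconj_le
    have hwHw : star w * H * w = cfc (fun t => q t * t * q t) H := by
      rw [hwsa.star_eq, hw_def]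
      rw [cfc_mul (fun t => q t * t) q H ((hq_cont.mul continuous_id).continuousOn)
        hq_cont.continuousOn,
        cfc_mul q (fun t : ℝ => t) H hq_cont.continuousOn continuous_id.continuousOn,
        cfc_id' ℝ H hHsa]
    have hwHw_norm : ‖cfc (fun t => q t * t * q t) H‖ ≤ δ₂ := by
      refine norm_cfc_le hδ₂.le fun t ht => ?_
      have ht0 := hspec t ht
      have hfle := hf_le_one t
      have hfnn := hf_nonneg t
      rcases le_or_gt δ₂ t with h | h
      · have hft : f t = 1 := by
          rw [hf_def]; dsimp only
          have h1 : (1:ℝ) ≤ (t - δ)/(δ₂ - δ) := by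
            rw [le_div_iff₀ (by linarith)]
            linarith
          rw [min_eq_right h1, max_eq_right hδ'1]
        have hqt : q t = 0 := by rw [hq_def]; dsimp only; rw [hft]; ring
        rw [Real.norm_eq_abs, hqt]
        simp only [zero_mul, mul_zero, abs_zero]
        exact hδ₂.le
      · have habs : |q t| ≤ 1 := by
          rw [hq_def]; dsimp only
          rw [abs_le]
          constructor <;> linarith
        have : |q t * t * q t| = |q t| * t * |q t| := by
          rw [abs_mul, abs_mul, abs_of_nonneg ht0]
        rw [Real.norm_eq_abs, this]
        nlinarith [abs_nonneg (q t), mul_nonneg (abs_nonneg (q t)) ht0]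
    have boundA : ‖x i * (u - 1)‖ ≤ ε / 3 := by
      have hsq : ‖x i * w‖ * ‖x i * w‖ ≤ δ₂ := by
        have h1 : ‖star (x i * w) * (x i * w)‖ = ‖x i * w‖ * ‖x i * w‖ :=
          CStarRing.norm_star_mul_self
        have h2 : star (x i * w) * (x i * w) = star w * (star (x i) * x i) * w := by
          rw [star_mul]
          noncomm_ring
        rw [← h1, h2]
        calc ‖star w * (star (x i) * x i) * w‖ ≤ ‖star w * H * w‖ := hnorm_le
          _ = ‖cfc (fun t => q t * t * q t) H‖ := by rw [hwHw]
          _ ≤ δ₂ := hwHw_norm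
      rw [hw_eq]
      have hn : 0 ≤ ‖x i * w‖ := norm_nonneg _
      have hε3 : 0 < ε / 3 := by positivity
      nlinarith [hδ₂_def, hsq, hn]
    -- Bound B : ‖a i * (y * u)‖ ≤ ε / 3
    have hyu : y * u = cfc (fun t => e t * f t) H := by
      rw [hy_def, hu_def, cfc_mul e f H he_cont.continuousOn hf_cont.continuousOn]
    have hyu_norm : ‖y * u‖ ≤ δ' := by
      rw [hyu]
      refine norm_cfc_le hδ'0.le fun t ht => ?_
      have ht0 := hspec t ht
      rcases le_or_gt δ t with h | h
      · have : e t = 0 := by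
          rw [he_def]; dsimp only
          rw [max_eq_right]
          rw [sub_nonpos, le_div_iff₀ hδ]
          linarith
        rw [Real.norm_eq_abs, this, zero_mul, abs_zero]
        exact hδ'0.le
      · have hft : f t = δ' := by
          rw [hf_def]; dsimp only
          have h1 : (t - δ)/(δ₂ - δ) < 0 := by
            apply div_neg_of_neg_of_pos <;> linarith
          rw [min_eq_left (by linarith), max_eq_left (by linarith)]
        have he1 : 0 ≤ e t := le_max_right _ _
        have he2 : e t ≤ 1 := by
          rw [he_def]; dsimp only
          apply max_le _ zero_le_one
          have : 0 ≤ t / δ := by positivity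
          linarith
        rw [Real.norm_eq_abs, hft, abs_of_nonneg (mul_nonneg he1 hδ'0.le)]
        nlinarith [he1, he2, hδ'0.le]
    have boundB : ‖a i * (y * u)‖ ≤ ε / 3 := by
      calc ‖a i * (y * u)‖ ≤ ‖a i‖ * ‖y * u‖ := norm_mul_le _ _
        _ ≤ M * δ' := by
            apply mul_le_mul (hMa i) hyu_norm (norm_nonneg _) hM0.le
        _ ≤ ε / 3 := hδ'ε
    rw [dist_eq_norm, hsplit]
    calc ‖x i * (u - 1) + a i * (y * u)‖ ≤ ‖x i * (u - 1)‖ + ‖a i * (y * u)‖ :=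
        norm_add_le _ _
      _ ≤ ε / 3 + ε / 3 := add_le_add boundA boundB
      _ < ε := by linarith
  exact ⟨z, Metric.mem_ball.mpr ((dist_pi_lt_iff hε).mpr key_dist), hz_mem⟩


/-- Density of unimodular `n`-tuples implies every unimodular `(n+1)`-tuple reduces. -/
lemma dense_imp_reduce {A : Type*} [CStarAlgebra A] {n : ℕ}
    (hd : Dense {x : Fin n → A | ∃ b : Fin n → A, ∑ i, b i * x i = 1})
    (x : Fin n → A) (y : A)
    (h : ∃ (b : Fin n → A) (c : A), ∑ i, b i * x i + c * y = 1) :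
    ∃ a : Fin n → A, ∃ b : Fin n → A, ∑ i, b i * (x i + a i * y) = 1 := by
  obtain ⟨b, c, hbc⟩ := h
  set ε : ℝ := (∑ i, ‖b i‖ + 1)⁻¹ with hε_def
  have hbsum : (0:ℝ) ≤ ∑ i, ‖b i‖ := Finset.sum_nonneg fun i _ => norm_nonneg _
  have hε : 0 < ε := by positivity
  obtain ⟨z, hz_ball, d, hd1⟩ := (Metric.dense_iff.mp hd) x ε hε
  have hz_close : ∀ i, ‖z i - x i‖ < ε := by
    intro i
    have := (dist_pi_lt_iff hε).mp (Metric.mem_ball.mp hz_ball) i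
    rwa [dist_eq_norm] at this
  set t : A := ∑ i, b i * (z i - x i) with ht_def
  have ht_norm : ‖t‖ < 1 := by
    have h1 : ‖t‖ ≤ ∑ i, ‖b i‖ * ε := by
      refine (norm_sum_le _ _).trans ?_
      refine Finset.sum_le_sum fun i _ => ?_
      exact (norm_mul_le _ _).trans
        (mul_le_mul_of_nonneg_left (hz_close i).le (norm_nonneg _))
    have h2 : (∑ i, ‖b i‖ * ε) = (∑ i, ‖b i‖) * ε := by rw [Finset.sum_mul]
    have h3 : (∑ i, ‖b i‖) * ε < 1 := by
      rw [hε_def]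
      rw [mul_inv_lt_iff₀ (by positivity)]
      linarith
    calc ‖t‖ ≤ _ := h1
      _ = _ := h2
      _ < 1 := h3
  set v : Aˣ := Units.oneSub (-t) (by rwa [norm_neg]) with hv_def
  have hv_val : (v : A) = 1 + t := by
    simp [hv_def, Units.val_oneSub, sub_neg_eq_add]
  set V : A := ((v⁻¹ : Aˣ) : A) with hV_def
  have hvV : (1 + t) * V = 1 := by rw [← hv_val]; exact v.mul_inv
  have hVv : V * (1 + t) = 1 := by rw [← hv_val]; exact v.inv_mul
  set S : A := ∑ i, b i * z i with hS_def
  have hScy : S + c * y = 1 + t := by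
    have : t = S - ∑ i, b i * x i := by
      rw [ht_def, hS_def, ← Finset.sum_sub_distrib]
      exact Finset.sum_congr rfl fun i _ => by rw [mul_sub]
    rw [this]
    have : ∑ i, b i * x i = 1 - c * y := by rw [← hbc]; noncomm_ring
    rw [this]; noncomm_ring
  -- the reduction
  refine ⟨fun i => (z i - x i) * V * c, fun i => d i + (∑ j, d j * (z j - x j)) * b i, ?_⟩
  set P : A := ∑ j, d j * (z j - x j) with hP_def
  have hw : ∀ i, x i + ((z i - x i) * V * c) * y = z i - (z i - x i) * (V * S) := by
    intro i
    have hcy : c * y = (1 + t) - S := by rw [← hScy]; noncomm_ring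
    have : (z i - x i) * V * c * y = (z i - x i) * (V * (c * y)) := by
      rw [mul_assoc, mul_assoc]
    rw [this, hcy, mul_sub, hVv, mul_sub, mul_one]
    noncomm_ring
  have key : ∑ i, (d i + P * b i) * (x i + ((z i - x i) * V * c) * y) = 1 := by
    have expand : ∀ i, (d i + P * b i) * (x i + ((z i - x i) * V * c) * y)
        = d i * z i - (d i * (z i - x i)) * (V * S)
          + (P * (b i * z i) - P * ((b i * (z i - x i)) * (V * S))) := by
      intro i
      rw [hw i]
      noncomm_ring
    rw [Finset.sum_congr rfl fun i _ => expand i]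
    rw [Finset.sum_add_distrib, Finset.sum_sub_distrib, ← Finset.sum_mul, hd1]
    have h4 : ∑ i, (P * (b i * z i) - P * (b i * (z i - x i) * (V * S)))
        = P * S - P * (t * (V * S)) := by
      rw [Finset.sum_sub_distrib, ← Finset.mul_sum, ← hS_def, ← Finset.mul_sum]
      congr 2
      rw [ht_def, Finset.sum_mul]
    rw [h4]
    have ht_VS : t * (V * S) = S - V * S := by
      have : t * V = 1 - V := by
        have : (1 + t) * V = V + t * V := by noncomm_ring
        rw [this] at hvV
        rw [eq_sub_iff_add_eq, add_comm]; exact hvV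
      rw [← mul_assoc, this]
      noncomm_ring
    rw [ht_VS, ← hP_def]
    noncomm_ring
  exact key

/-- Herman–Vaserstein: `Bsr(A) = tsr(A)`.  Let `A` be a unital
C⋆-algebra, viewed as a left module over itself.  The least `n ≥ 1` such that every
left-unimodular `(n+1)`-tuple `(x₁, …, xₙ, y)` can be reduced (there are `a₁, …, aₙ ∈ A`
with `(x₁ + a₁ y, …, xₙ + aₙ y)` left-unimodular) equals the least `n ≥ 1` such that the
set of left-unimodular `n`-tuples is dense in `Aⁿ`, both taken in `ℕ ∪ {∞}`. -/
theorem bsr_eq_tsr_cstarAlgebra (A : Type*) [CStarAlgebra A] :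
    sInf ((fun n : ℕ => (n : ℕ∞)) '' {n : ℕ | 1 ≤ n ∧
        ∀ (x : Fin n → A) (y : A),
          (∃ (b : Fin n → A) (c : A), ∑ i, b i * x i + c * y = 1) →
            ∃ a : Fin n → A, ∃ b : Fin n → A, ∑ i, b i * (x i + a i * y) = 1}) =
      sInf ((fun n : ℕ => (n : ℕ∞)) '' {n : ℕ | 1 ≤ n ∧
        Dense {x : Fin n → A | ∃ b : Fin n → A, ∑ i, b i * x i = 1}}) := by
  have hset : {n : ℕ | 1 ≤ n ∧
        ∀ (x : Fin n → A) (y : A),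
          (∃ (b : Fin n → A) (c : A), ∑ i, b i * x i + c * y = 1) →
            ∃ a : Fin n → A, ∃ b : Fin n → A, ∑ i, b i * (x i + a i * y) = 1}
      = {n : ℕ | 1 ≤ n ∧ Dense {x : Fin n → A | ∃ b : Fin n → A, ∑ i, b i * x i = 1}} := by
    ext n
    simp only [Set.mem_setOf_eq]
    refine and_congr_right fun _ => ⟨fun h => reduce_imp_dense h,
      fun h x y hxy => dense_imp_reduce h x y hxy⟩
  rw [hset]
end
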